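/- arXiv:2211.07208 — 10 statements merged into one kernel-verified Lean document; each statement's English description precedes it below -/
import Mathlib

section
/- If Xⁿ is uniformly distributed on F₂ⁿ, then Xⁿ ⊕ H̃Xⁿ is uniformly distributed on the codebook C (a set of exactly 2^k elements). (Lemma 1(ii).) -/
/-- The matrix `H̃` whose first `k` rows are zero and whose last `n − k` rows
equal `B⁻¹ H`.  Coordinates of `F₂ⁿ` are indexed by `Fin k ⊕ Fin l`
(so `n = k + l`). -/
def Htilde {k l : ℕ} (H : Matrix (Fin l) (Fin k ⊕ Fin l) (ZMod 2))
    (Binv : Matrix (Fin l) (Fin l) (ZMod 2)) :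
    Matrix (Fin k ⊕ Fin l) (Fin k ⊕ Fin l) (ZMod 2) :=
  Matrix.of fun i j => Sum.elim (fun _ => (0 : ZMod 2)) (fun i' => (Binv * H) i' j) i

section aux

variable {k l : ℕ} (H : Matrix (Fin l) (Fin k ⊕ Fin l) (ZMod 2))
  (Binv : Matrix (Fin l) (Fin l) (ZMod 2))

lemma mulVec_split (M : Matrix (Fin l) (Fin k ⊕ Fin l) (ZMod 2))
    (c : (Fin k ⊕ Fin l) → ZMod 2) :
    M.mulVec c = (M.submatrix id Sum.inl).mulVec (c ∘ Sum.inl)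
      + (M.submatrix id Sum.inr).mulVec (c ∘ Sum.inr) := by
  funext i
  simp [Matrix.mulVec, dotProduct, Fintype.sum_sum_type]

lemma mem_code_iff (hB : H.submatrix id Sum.inr * Binv = 1)
    (hB' : Binv * H.submatrix id Sum.inr = 1)
    (c : (Fin k ⊕ Fin l) → ZMod 2) :
    H.mulVec c = 0 ↔
      c ∘ Sum.inr = (Binv * H.submatrix id Sum.inl).mulVec (c ∘ Sum.inl) := by
  constructor
  · intro h
    have h2 : Binv.mulVec (H.mulVec c) = 0 := by rw [h, Matrix.mulVec_zero]
    rw [mulVec_split H c, Matrix.mulVec_add, Matrix.mulVec_mulVec,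
      Matrix.mulVec_mulVec, hB', Matrix.one_mulVec] at h2
    funext i
    have := congrFun h2 i
    simp only [Pi.add_apply, Pi.zero_apply] at this
    have := CharTwo.add_eq_iff_eq_add.mp this
    simpa [CharTwo.neg_eq] using this.symm
  · intro h
    rw [mulVec_split H c, h, Matrix.mulVec_mulVec,
      ← Matrix.mul_assoc, hB, Matrix.one_mul]
    exact funext fun i => CharTwo.add_self_eq_zero _

lemma add_Htilde_eq (hB' : Binv * H.submatrix id Sum.inr = 1)
    (x : (Fin k ⊕ Fin l) → ZMod 2) :
    x + (Htilde H Binv).mulVec x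
      = Sum.elim (x ∘ Sum.inl)
          ((Binv * H.submatrix id Sum.inl).mulVec (x ∘ Sum.inl)) := by
  have hM : (Htilde H Binv).mulVec x
      = Sum.elim (0 : Fin k → ZMod 2) ((Binv * H).mulVec x) := by
    funext i
    cases i with
    | inl i => simp [Htilde, Matrix.mulVec, dotProduct]
    | inr i => simp [Htilde, Matrix.mulVec, dotProduct]
  have hBH : (Binv * H).mulVec x
      = (Binv * H.submatrix id Sum.inl).mulVec (x ∘ Sum.inl) + (x ∘ Sum.inr) := by
    rw [← Matrix.mulVec_mulVec, mulVec_split H x, Matrix.mulVec_add,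
      Matrix.mulVec_mulVec, Matrix.mulVec_mulVec, hB', Matrix.one_mulVec]
  funext i
  cases i with
  | inl i => simp [hM]
  | inr i =>
    simp only [Pi.add_apply, hM, Sum.elim_inr, hBH, Function.comp_apply]
    rw [add_comm, add_assoc]
    simp [CharTwo.add_self_eq_zero]

end aux

/-- **Lemma 1(ii).**  If `Xⁿ` is uniform on `F₂ⁿ`, then `Xⁿ ⊕ H̃Xⁿ` is uniform
on the codebook `C = {c : Hc = 0}`, a set of exactly `2^k` elements:
the codebook has `2^k` elements, and for every `c` the probability that
`Xⁿ ⊕ H̃Xⁿ = c` equals `1/2^k` if `c ∈ C` and `0` otherwise. -/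
theorem stmt1 (k l : ℕ) (hl : 0 < l)
    (H : Matrix (Fin l) (Fin k ⊕ Fin l) (ZMod 2))
    (Binv : Matrix (Fin l) (Fin l) (ZMod 2))
    (hB : H.submatrix id Sum.inr * Binv = 1)
    (hB' : Binv * H.submatrix id Sum.inr = 1) :
    (Finset.univ.filter
        (fun c : (Fin k ⊕ Fin l) → ZMod 2 => H.mulVec c = 0)).card = 2 ^ k ∧
    ∀ c : (Fin k ⊕ Fin l) → ZMod 2,
      ((Finset.univ.filter
          (fun x : (Fin k ⊕ Fin l) → ZMod 2 =>
            x + (Htilde H Binv).mulVec x = c)).card : ℝ)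
          / (Fintype.card ((Fin k ⊕ Fin l) → ZMod 2) : ℝ)
        = if H.mulVec c = 0 then 1 / 2 ^ k else 0 := by
  set N := Binv * H.submatrix id Sum.inl with hN
  constructor
  · have : (Finset.univ.filter
        (fun c : (Fin k ⊕ Fin l) → ZMod 2 => H.mulVec c = 0)).card
        = (Finset.univ : Finset (Fin k → ZMod 2)).card := by
      apply Finset.card_nbij' (fun c => c ∘ Sum.inl)
        (fun a => Sum.elim a (N.mulVec a))
      · intro a _; exact Finset.mem_univ _
      · intro a _
        simp only [Finset.mem_coe, Finset.mem_filter, Finset.mem_univ, true_and]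
        rw [mem_code_iff H Binv hB hB']
        funext i; simp [hN]
      · intro a ha
        simp only [Finset.mem_coe, Finset.mem_filter, Finset.mem_univ, true_and] at ha
        rw [mem_code_iff H Binv hB hB'] at ha
        funext i
        cases i with
        | inl i => simp
        | inr i => simpa using (congrFun ha i).symm
      · intro a _
        funext i; simp
    rw [this]
    simp [ZMod.card]
  · intro c
    have hcond : ∀ x : (Fin k ⊕ Fin l) → ZMod 2,
        x + (Htilde H Binv).mulVec x = c ↔
          (x ∘ Sum.inl = c ∘ Sum.inl ∧ N.mulVec (c ∘ Sum.inl) = c ∘ Sum.inr) := by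
      intro x
      rw [add_Htilde_eq H Binv hB']
      constructor
      · intro h
        have hL : x ∘ Sum.inl = c ∘ Sum.inl := by
          funext i; exact congrFun h (Sum.inl i)
        refine ⟨hL, ?_⟩
        funext i
        have := congrFun h (Sum.inr i)
        simp only [Sum.elim_inr] at this
        rw [← hL]; exact this
      · rintro ⟨hL, hR⟩
        funext i
        cases i with
        | inl i => simpa using congrFun hL i
        | inr i => simp only [Sum.elim_inr]; rw [hL]; exact congrFun hR i
    by_cases hc : H.mulVec c = 0
    · rw [if_pos hc]
      rw [mem_code_iff H Binv hB hB'] at hc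
      have hcount : (Finset.univ.filter
          (fun x : (Fin k ⊕ Fin l) → ZMod 2 =>
            x + (Htilde H Binv).mulVec x = c)).card
          = (Finset.univ : Finset (Fin l → ZMod 2)).card := by
        apply Finset.card_nbij' (fun x => x ∘ Sum.inr)
          (fun r => Sum.elim (c ∘ Sum.inl) r)
        · intro a _; exact Finset.mem_univ _
        · intro r _
          simp only [Finset.mem_coe, Finset.mem_filter, Finset.mem_univ, true_and]
          rw [hcond]
          constructor
          · funext i; simp
          · exact hc.symm
        · intro x hx
          simp only [Finset.mem_coe, Finset.mem_filter, Finset.mem_univ, true_and] at hx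
          rw [hcond] at hx
          funext i
          cases i with
          | inl i => simpa using (congrFun hx.1 i).symm
          | inr i => simp
        · intro r _; funext i; simp
      rw [hcount]
      have h1 : ((Finset.univ : Finset (Fin l → ZMod 2)).card : ℝ) = 2 ^ l := by
        simp [ZMod.card]
      have h2 : ((Fintype.card ((Fin k ⊕ Fin l) → ZMod 2)) : ℝ) = 2 ^ (k + l) := by
        simp [ZMod.card]
      rw [h1, h2, pow_add]
      field_simp
    · rw [if_neg hc]
      have : (Finset.univ.filter
          (fun x : (Fin k ⊕ Fin l) → ZMod 2 =>
            x + (Htilde H Binv).mulVec x = c)) = ∅ := by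
        apply Finset.filter_false_of_mem
        intro x _ hx
        rw [hcond] at hx
        apply hc
        rw [mem_code_iff H Binv hB hB']
        exact hx.2.symm
      rw [this]
      simp
end

section
/- Let ((Xᵢ,Yᵢ))_{i=1..n} be i.i.d. with law p(x,y) and let Vⁿ be i.i.d. uniform on F₂, independent of (Xⁿ,Yⁿ). Define Cⁿ = Xⁿ ⊕ Vⁿ ⊕ H̃Xⁿ ⊕ H̃Vⁿ and Uⁿ = Vⁿ ⊕ H̃Vⁿ ⊕ H̃Xⁿ. Then for every cⁿ in the codebook C, every uⁿ ∈ F₂ⁿ, and every yⁿ ∈ 𝒴ⁿ: P{Cⁿ = cⁿ, Uⁿ = uⁿ, Yⁿ = yⁿ} = 2^{−k} · ∏_{i=1}^{n} p(cᵢ ⊕ uᵢ, yᵢ). (Lemma 2.) -/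
/-- **Lemma 2.**  Let `(Xᵢ,Yᵢ)` be i.i.d. with law `p(x,y)` and `Vⁿ` i.i.d.
uniform on `F₂` independent of `(Xⁿ,Yⁿ)`.  With
`Cⁿ = Xⁿ ⊕ Vⁿ ⊕ H̃Xⁿ ⊕ H̃Vⁿ` and `Uⁿ = Vⁿ ⊕ H̃Vⁿ ⊕ H̃Xⁿ`, for every `cⁿ`
in the codebook, every `uⁿ`, and every `yⁿ`:
`P{Cⁿ = cⁿ, Uⁿ = uⁿ, Yⁿ = yⁿ} = 2^{−k} ∏ᵢ p(cᵢ ⊕ uᵢ, yᵢ)`. -/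
theorem stmt3 (k l : ℕ) (hl : 0 < l)
    (H : Matrix (Fin l) (Fin k ⊕ Fin l) (ZMod 2))
    (Binv : Matrix (Fin l) (Fin l) (ZMod 2))
    (hB : H.submatrix id Sum.inr * Binv = 1)
    (hB' : Binv * H.submatrix id Sum.inr = 1)
    (𝒴 : Type) [Fintype 𝒴]
    (p : ZMod 2 → 𝒴 → ℝ) (hp0 : ∀ x y, 0 ≤ p x y)
    (hp1 : ∑ x : ZMod 2, ∑ y : 𝒴, p x y = 1)
    (c : (Fin k ⊕ Fin l) → ZMod 2) (hc : H.mulVec c = 0)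
    (u : (Fin k ⊕ Fin l) → ZMod 2) (y : (Fin k ⊕ Fin l) → 𝒴) :
    ∑ x : (Fin k ⊕ Fin l) → ZMod 2, ∑ v : (Fin k ⊕ Fin l) → ZMod 2,
      (if x + v + (Htilde H Binv).mulVec x + (Htilde H Binv).mulVec v = c ∧
          v + (Htilde H Binv).mulVec v + (Htilde H Binv).mulVec x = u then
        (∏ i, p (x i) (y i)) * ((1 : ℝ) / 2 ^ (k + l))
      else 0)
    = ((1 : ℝ) / 2 ^ k) * ∏ i, p (c i + u i) (y i) := by
  classical
  have hTinl : ∀ (z : (Fin k ⊕ Fin l) → ZMod 2) (i : Fin k),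
      (Htilde H Binv).mulVec z (Sum.inl i) = 0 := by
    intro z i
    simp [Htilde, Matrix.mulVec, dotProduct]
  have hM1 : ∀ (j j' : Fin l), (Binv * H) j (Sum.inr j') = if j = j' then 1 else 0 := by
    intro j j'
    have h := congrFun (congrFun hB' j) j'
    simpa [Matrix.mul_apply, Matrix.submatrix_apply, Matrix.one_apply] using h
  have hBH : ∀ (z : (Fin k ⊕ Fin l) → ZMod 2) (j : Fin l),
      (Binv * H).mulVec z j
        = (∑ i' : Fin k, (Binv * H) j (Sum.inl i') * z (Sum.inl i')) + z (Sum.inr j) := by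
    intro z j
    rw [Matrix.mulVec, dotProduct, Fintype.sum_sum_type]
    congr 1
    simp [hM1, ite_mul, Finset.sum_ite_eq]
  have hTinr : ∀ (z : (Fin k ⊕ Fin l) → ZMod 2) (j : Fin l),
      (Htilde H Binv).mulVec z (Sum.inr j)
        = (∑ i' : Fin k, (Binv * H) j (Sum.inl i') * z (Sum.inl i')) + z (Sum.inr j) := by
    intro z j
    have h : (Htilde H Binv).mulVec z (Sum.inr j) = (Binv * H).mulVec z j := by
      simp [Htilde, Matrix.mulVec, dotProduct]
    rw [h, hBH]
  have hMc : ∀ j, (∑ i' : Fin k, (Binv * H) j (Sum.inl i') * c (Sum.inl i')) + c (Sum.inr j) = 0 := by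
    intro j
    have h0 : (Binv * H).mulVec c = 0 := by
      rw [← Matrix.mulVec_mulVec, hc, Matrix.mulVec_zero]
    have h := congrFun h0 j
    rw [hBH c j] at h
    simpa using h
  have lemA : ∀ a b d e f g' : ZMod 2, a + b + d + e = f → b + e + d = g' → a = f + g' := by decide
  have lemB : ∀ a b d e f g' : ZMod 2, b + e + d = g' → a = f + g' → a + b + d + e = f := by decide
  have lemC : ∀ a b cc d e : ZMod 2, cc + d = 0 → a + (b + a) + ((cc + b) + (d + e)) = e := by decide
  have key : ∀ (x v : (Fin k ⊕ Fin l) → ZMod 2),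
      (x + v + (Htilde H Binv).mulVec x + (Htilde H Binv).mulVec v = c ∧
       v + (Htilde H Binv).mulVec v + (Htilde H Binv).mulVec x = u)
      ↔ (x = c + u ∧ ∀ i, v (Sum.inl i) = u (Sum.inl i)) := by
    intro x v
    constructor
    · rintro ⟨h1, h2⟩
      have hx : x = c + u := by
        funext i
        have e1 := congrFun h1 i
        have e2 := congrFun h2 i
        simp only [Pi.add_apply] at e1 e2 ⊢
        exact lemA _ _ _ _ _ _ e1 e2
      refine ⟨hx, fun i => ?_⟩
      have e2 := congrFun h2 (Sum.inl i)
      simpa [hTinl, Pi.add_apply] using e2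
    · rintro ⟨hx, hv⟩
      have h2 : v + (Htilde H Binv).mulVec v + (Htilde H Binv).mulVec x = u := by
        funext i
        cases i with
        | inl i =>
          simpa [hTinl, Pi.add_apply] using hv i
        | inr j =>
          simp only [Pi.add_apply]
          rw [hTinr v j, hTinr x j]
          have hgv : (∑ i' : Fin k, (Binv * H) j (Sum.inl i') * v (Sum.inl i'))
              = ∑ i' : Fin k, (Binv * H) j (Sum.inl i') * u (Sum.inl i') :=
            Finset.sum_congr rfl fun i' _ => by rw [hv i']
          have hgx : (∑ i' : Fin k, (Binv * H) j (Sum.inl i') * x (Sum.inl i'))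
              = (∑ i' : Fin k, (Binv * H) j (Sum.inl i') * c (Sum.inl i'))
                + ∑ i' : Fin k, (Binv * H) j (Sum.inl i') * u (Sum.inl i') := by
            rw [← Finset.sum_add_distrib]
            refine Finset.sum_congr rfl fun i' _ => by rw [hx]; simp [mul_add]
          rw [hgv, hgx, hx]
          simp only [Pi.add_apply]
          exact lemC _ _ _ _ _ (hMc j)
      refine ⟨?_, h2⟩
      funext i
      have e2 := congrFun h2 i
      have ex := congrFun hx i
      simp only [Pi.add_apply] at e2 ex ⊢
      exact lemB _ _ _ _ _ _ e2 ex
  calc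
    (∑ x : (Fin k ⊕ Fin l) → ZMod 2, ∑ v : (Fin k ⊕ Fin l) → ZMod 2,
      (if x + v + (Htilde H Binv).mulVec x + (Htilde H Binv).mulVec v = c ∧
          v + (Htilde H Binv).mulVec v + (Htilde H Binv).mulVec x = u then
        (∏ i, p (x i) (y i)) * ((1 : ℝ) / 2 ^ (k + l))
      else 0))
      = ∑ v : (Fin k ⊕ Fin l) → ZMod 2, ∑ x : (Fin k ⊕ Fin l) → ZMod 2,
          (if x = c + u then
            (if (∀ i, v (Sum.inl i) = u (Sum.inl i)) then
              (∏ i, p (x i) (y i)) * ((1 : ℝ) / 2 ^ (k + l)) else 0)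
          else 0) := by
        rw [Finset.sum_comm]
        refine Finset.sum_congr rfl fun v _ => Finset.sum_congr rfl fun x _ => ?_
        rw [if_congr (key x v) rfl rfl, ite_and]
    _ = ∑ v : (Fin k ⊕ Fin l) → ZMod 2,
          (if (∀ i, v (Sum.inl i) = u (Sum.inl i)) then
            (∏ i, p ((c + u) i) (y i)) * ((1 : ℝ) / 2 ^ (k + l)) else 0) := by
        refine Finset.sum_congr rfl fun v _ => ?_
        rw [Finset.sum_ite_eq' Finset.univ (c + u)]
        simp
    _ = ((Finset.univ.filter fun v : (Fin k ⊕ Fin l) → ZMod 2 =>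
            ∀ i, v (Sum.inl i) = u (Sum.inl i)).card : ℝ)
          * ((∏ i, p ((c + u) i) (y i)) * ((1 : ℝ) / 2 ^ (k + l))) := by
        rw [Finset.sum_ite, Finset.sum_const, Finset.sum_const_zero, add_zero, nsmul_eq_mul]
    _ = ((1 : ℝ) / 2 ^ k) * ∏ i, p (c i + u i) (y i) := by
        have hcard : (Finset.univ.filter fun v : (Fin k ⊕ Fin l) → ZMod 2 =>
            ∀ i, v (Sum.inl i) = u (Sum.inl i)).card = 2 ^ l := by
          have himg : (Finset.univ.filter fun v : (Fin k ⊕ Fin l) → ZMod 2 =>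
              ∀ i, v (Sum.inl i) = u (Sum.inl i))
              = Finset.image (fun w : Fin l → ZMod 2 =>
                  Sum.elim (fun i => u (Sum.inl i)) w) Finset.univ := by
            ext v
            simp only [Finset.mem_filter, Finset.mem_univ, true_and, Finset.mem_image]
            constructor
            · intro h
              refine ⟨fun j => v (Sum.inr j), ?_⟩
              funext i
              cases i with
              | inl i => simp [h i]
              | inr j => simp
            · rintro ⟨w, rfl⟩ i
              simp
          have hinj : Function.Injective (fun w : Fin l → ZMod 2 =>
              Sum.elim (fun i => u (Sum.inl i)) w) := by
            intro a b hab
            funext j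
            exact congrFun hab (Sum.inr j)
          rw [himg, Finset.card_image_of_injective _ hinj, Finset.card_univ]
          simp
        rw [hcard]
        have hprod : (∏ i, p ((c + u) i) (y i)) = ∏ i, p (c i + u i) (y i) := by
          refine Finset.prod_congr rfl fun i _ => by simp
        rw [hprod, pow_add]
        push_cast
        have h2k : (2 : ℝ) ^ k ≠ 0 := by positivity
        have h2l : (2 : ℝ) ^ l ≠ 0 := by positivity
        field_simp
end

section
/- Let X be a random variable with values in F₂ and Y a random variable with values in a finite set 𝒴 on a common probability space, and let V be uniformly distributed on F₂ and independent of the pair (X,Y). Set X̄ = X ⊕ V and Ȳ = (Y,V). Then X̄ is uniform on F₂ and the mutual information satisfies I[X̄ : Ȳ] = log 2 − H[X | Y] (entropy with natural logarithm; equivalently, in bits, I(X̄;Ȳ) = 1 − H(X|Y)). (Remark 3(iii): the symmetric capacity of the symmetrized channel equals 1 − H(X|Y).) -/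
/-- Shannon entropy (with natural logarithm) of a finitely supported pmf,
`H(f) = ∑ₐ −f(a) log f(a)`, as in Mathlib's entropy conventions. -/
noncomputable def pmfEntropy {α : Type*} [Fintype α] (f : α → ℝ) : ℝ :=
  ∑ a, Real.negMulLog (f a)

private lemma h2sum (f : ZMod 2 → ℝ) : ∑ v, f v = f 0 + f 1 := by
  rw [show (Finset.univ : Finset (ZMod 2)) = {0, 1} from by decide]
  rw [Finset.sum_insert (by decide), Finset.sum_singleton]

private lemma swap2 (v : ZMod 2) (f : ZMod 2 → ℝ) : f (v + 0) + f (v + 1) = f 0 + f 1 := by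
  have h : v = 0 ∨ v = 1 := by fin_cases v <;> [exact Or.inl rfl; exact Or.inr rfl]
  rcases h with h | h <;> subst h
  · simp
  · rw [show ((1 : ZMod 2) + 0) = 1 from by decide, show ((1 : ZMod 2) + 1) = 0 from by decide]
    ring

private lemma nml_half (a : ℝ) :
    Real.negMulLog (a * (1 / 2)) = Real.negMulLog a / 2 + a / 2 * Real.log 2 := by
  rcases eq_or_ne a 0 with h | h
  · simp [h, Real.negMulLog]
  · unfold Real.negMulLog
    rw [Real.log_mul h (by norm_num), one_div, Real.log_inv]
    ring

private lemma nml_half' : Real.negMulLog (1 / 2 : ℝ) = Real.log 2 / 2 := by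
  unfold Real.negMulLog; rw [one_div, Real.log_inv]; ring

private lemma final_calc {𝒴 : Type} [Fintype 𝒴] (a b : 𝒴 → ℝ)
    (h : ∑ y, (a y + b y) = 1) :
    Real.log 2 + ∑ y, 2 * Real.negMulLog ((a y + b y) * (1 / 2))
      - ∑ y, 2 * (Real.negMulLog (a y * (1 / 2)) + Real.negMulLog (b y * (1 / 2)))
    = Real.log 2
      - ((∑ y, (Real.negMulLog (a y) + Real.negMulLog (b y)))
          - ∑ y, Real.negMulLog (a y + b y)) := by
  have h2' : ∑ y, 2 * Real.negMulLog ((a y + b y) * (1 / 2))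
      = (∑ y, Real.negMulLog (a y + b y)) + Real.log 2 := by
    calc ∑ y, 2 * Real.negMulLog ((a y + b y) * (1 / 2))
        = ∑ y, (Real.negMulLog (a y + b y) + (a y + b y) * Real.log 2) :=
          Finset.sum_congr rfl fun y _ => by rw [nml_half]; ring
      _ = (∑ y, Real.negMulLog (a y + b y)) + (∑ y, (a y + b y)) * Real.log 2 := by
          rw [Finset.sum_add_distrib, Finset.sum_mul]
      _ = _ := by rw [h, one_mul]
  have h3' : ∑ y, 2 * (Real.negMulLog (a y * (1 / 2)) + Real.negMulLog (b y * (1 / 2)))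
      = (∑ y, (Real.negMulLog (a y) + Real.negMulLog (b y))) + Real.log 2 := by
    calc ∑ y, 2 * (Real.negMulLog (a y * (1 / 2)) + Real.negMulLog (b y * (1 / 2)))
        = ∑ y, ((Real.negMulLog (a y) + Real.negMulLog (b y)) + (a y + b y) * Real.log 2) :=
          Finset.sum_congr rfl fun y _ => by rw [nml_half, nml_half]; ring
      _ = (∑ y, (Real.negMulLog (a y) + Real.negMulLog (b y)))
            + (∑ y, (a y + b y)) * Real.log 2 := by
          rw [Finset.sum_add_distrib, Finset.sum_mul]
      _ = _ := by rw [h, one_mul]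
  rw [h2', h3']; ring

/-- **Remark 3(iii).**  Let `(X, Y, V)` have joint pmf `r` on
`F₂ × 𝒴 × F₂`, where `V` is uniform on `F₂` and independent of `(X, Y)`
(hypothesis `hVindep`).  Set `X̄ = X ⊕ V` and `Ȳ = (Y, V)`, so that the
joint law of `(X̄, Ȳ)` is `(x̄, (y, v)) ↦ r x̄⊕v y v`.  Then `X̄` is uniform
on `F₂`, and the mutual information
`I[X̄ : Ȳ] = H[X̄] + H[Ȳ] − H[X̄, Ȳ]` equals `log 2 − H[X | Y]`, where
`H[X | Y] = H[X, Y] − H[Y]` (all entropies with natural logarithm). -/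
theorem stmt4 (𝒴 : Type) [Fintype 𝒴]
    (r : ZMod 2 → 𝒴 → ZMod 2 → ℝ)
    (hr0 : ∀ x y v, 0 ≤ r x y v)
    (hr1 : ∑ x : ZMod 2, ∑ y : 𝒴, ∑ v : ZMod 2, r x y v = 1)
    (hVindep : ∀ x y v, r x y v = (∑ v' : ZMod 2, r x y v') * (1 / 2)) :
    (∀ xb : ZMod 2, (∑ y : 𝒴, ∑ v : ZMod 2, r (xb + v) y v) = 1 / 2) ∧
    (pmfEntropy (fun xb : ZMod 2 => ∑ y : 𝒴, ∑ v : ZMod 2, r (xb + v) y v)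
        + pmfEntropy (fun yv : 𝒴 × ZMod 2 => ∑ xb : ZMod 2, r (xb + yv.2) yv.1 yv.2)
        - ∑ xb : ZMod 2, ∑ y : 𝒴, ∑ v : ZMod 2, Real.negMulLog (r (xb + v) y v)
      = Real.log 2
        - ((∑ x : ZMod 2, ∑ y : 𝒴, Real.negMulLog (∑ v : ZMod 2, r x y v))
            - pmfEntropy (fun y : 𝒴 => ∑ x : ZMod 2, ∑ v : ZMod 2, r x y v))) := by
  have hVeq : ∀ x y v, r x y v = (r x y 0 + r x y 1) * (1 / 2) := by
    intro x y v; rw [hVindep x y v, h2sum]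
  have hq1 : ∑ y, ((r 0 y 0 + r 0 y 1) + (r 1 y 0 + r 1 y 1)) = 1 := by
    simp only [h2sum] at hr1
    rw [Finset.sum_add_distrib]
    exact hr1
  have hmarg : ∀ xb : ZMod 2, (∑ y : 𝒴, ∑ v : ZMod 2, r (xb + v) y v) = 1 / 2 := by
    intro xb
    have step : ∑ y : 𝒴, ∑ v : ZMod 2, r (xb + v) y v
        = ∑ y, ((r 0 y 0 + r 0 y 1) + (r 1 y 0 + r 1 y 1)) * (1 / 2) := by
      refine Finset.sum_congr rfl fun y _ => ?_
      rw [h2sum (fun v => r (xb + v) y v)]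
      rw [hVeq (xb + 0) y 0, hVeq (xb + 1) y 1, ← add_mul]
      congr 1
      exact swap2 xb (fun w => r w y 0 + r w y 1)
    rw [step, ← Finset.sum_mul, hq1, one_mul]
  refine ⟨hmarg, ?_⟩
  have e1 : pmfEntropy (fun xb : ZMod 2 => ∑ y : 𝒴, ∑ v : ZMod 2, r (xb + v) y v)
      = Real.log 2 := by
    unfold pmfEntropy
    rw [h2sum (fun xb => Real.negMulLog (∑ y : 𝒴, ∑ v : ZMod 2, r (xb + v) y v))]
    rw [hmarg 0, hmarg 1, nml_half']; ring
  have e2 : pmfEntropy (fun yv : 𝒴 × ZMod 2 => ∑ xb : ZMod 2, r (xb + yv.2) yv.1 yv.2)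
      = ∑ y, 2 * Real.negMulLog (((r 0 y 0 + r 0 y 1) + (r 1 y 0 + r 1 y 1)) * (1 / 2)) := by
    unfold pmfEntropy
    rw [Fintype.sum_prod_type]
    refine Finset.sum_congr rfl fun y _ => ?_
    have key : ∀ v : ZMod 2, (∑ xb : ZMod 2, r (xb + v) y v)
        = ((r 0 y 0 + r 0 y 1) + (r 1 y 0 + r 1 y 1)) * (1 / 2) := by
      intro v
      rw [h2sum (fun xb => r (xb + v) y v)]
      rw [hVeq (0 + v) y v, hVeq (1 + v) y v, ← add_mul]
      congr 1
      rw [add_comm (0 : ZMod 2) v, add_comm (1 : ZMod 2) v]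
      exact swap2 v (fun w => r w y 0 + r w y 1)
    rw [h2sum (fun v => Real.negMulLog (∑ xb : ZMod 2, r (xb + v) y v))]
    rw [key 0, key 1]; ring
  have e3 : (∑ xb : ZMod 2, ∑ y : 𝒴, ∑ v : ZMod 2, Real.negMulLog (r (xb + v) y v))
      = ∑ y, 2 * (Real.negMulLog ((r 0 y 0 + r 0 y 1) * (1 / 2))
          + Real.negMulLog ((r 1 y 0 + r 1 y 1) * (1 / 2))) := by
    rw [h2sum (fun xb => ∑ y : 𝒴, ∑ v : ZMod 2, Real.negMulLog (r (xb + v) y v))]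
    rw [← Finset.sum_add_distrib]
    refine Finset.sum_congr rfl fun y _ => ?_
    rw [h2sum (fun v => Real.negMulLog (r (0 + v) y v)),
        h2sum (fun v => Real.negMulLog (r (1 + v) y v))]
    rw [hVeq (0 + 0) y 0, hVeq (0 + 1) y 1, hVeq (1 + 0) y 0, hVeq (1 + 1) y 1]
    simp only [zero_add, add_zero, show ((1 : ZMod 2) + 1) = 0 from by decide]
    ring
  have e4 : (∑ x : ZMod 2, ∑ y : 𝒴, Real.negMulLog (∑ v : ZMod 2, r x y v))
      = ∑ y, (Real.negMulLog (r 0 y 0 + r 0 y 1) + Real.negMulLog (r 1 y 0 + r 1 y 1)) := by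
    rw [h2sum (fun x => ∑ y : 𝒴, Real.negMulLog (∑ v : ZMod 2, r x y v)),
        ← Finset.sum_add_distrib]
    refine Finset.sum_congr rfl fun y _ => ?_
    rw [h2sum (fun v => r 0 y v), h2sum (fun v => r 1 y v)]
  have e5 : pmfEntropy (fun y : 𝒴 => ∑ x : ZMod 2, ∑ v : ZMod 2, r x y v)
      = ∑ y, Real.negMulLog ((r 0 y 0 + r 0 y 1) + (r 1 y 0 + r 1 y 1)) := by
    unfold pmfEntropy
    refine Finset.sum_congr rfl fun y _ => ?_
    show Real.negMulLog (∑ x : ZMod 2, ∑ v : ZMod 2, r x y v) = _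
    rw [h2sum (fun x => ∑ v : ZMod 2, r x y v), h2sum (fun v => r 0 y v),
        h2sum (fun v => r 1 y v)]
  rw [e1, e2, e3, e4, e5]
  exact final_calc (fun y => r 0 y 0 + r 0 y 1) (fun y => r 1 y 0 + r 1 y 1) hq1
end

section
/- Let (Xⁿ,Yⁿ) be i.i.d. with law p(x,y) and Vⁿ i.i.d. uniform on F₂, independent of (Xⁿ,Yⁿ). Define Zⁿ = H̃Xⁿ ⊕ Vⁿ ⊕ H̃Vⁿ and the Slepian–Wolf decoder output X̂ⁿ = φ(Zⁿ, Yⁿ) ⊕ Zⁿ. Then P{X̂ⁿ ≠ Xⁿ} = ε. (The Slepian–Wolf scheme with linear encoder x ↦ H̃x built from a point-to-point channel code for the symmetrized channel has average error probability exactly equal to that of the channel code.) -/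
namespace SW

variable {k l : ℕ} (H : Matrix (Fin l) (Fin k ⊕ Fin l) (ZMod 2))
  (Binv : Matrix (Fin l) (Fin l) (ZMod 2))

def g (a : Fin k → ZMod 2) : (Fin k ⊕ Fin l) → ZMod 2 :=
  Sum.elim a ((Binv * H.submatrix id Sum.inl).mulVec a)

lemma add_self {ι : Type*} (z : ι → ZMod 2) : z + z = 0 := by
  funext i; exact CharTwo.add_self_eq_zero _

lemma eq_of_add_eq_zero {u v : ZMod 2} (h : u + v = 0) : u = v := by
  revert h; revert u v; decide

lemma mulVec_sum (w : (Fin k ⊕ Fin l) → ZMod 2) :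
    H.mulVec w = (H.submatrix id Sum.inl).mulVec (w ∘ Sum.inl)
      + (H.submatrix id Sum.inr).mulVec (w ∘ Sum.inr) := by
  funext i
  simp [Matrix.mulVec, dotProduct, Fintype.sum_sum_type]

lemma Htilde_mulVec (w : (Fin k ⊕ Fin l) → ZMod 2) :
    (Htilde H Binv).mulVec w = Sum.elim (fun _ => (0:ZMod 2)) ((Binv * H).mulVec w) := by
  funext i
  cases i with
  | inl i => simp [Htilde, Matrix.mulVec, dotProduct]
  | inr i => simp [Htilde, Matrix.mulVec, dotProduct]

lemma key (hB' : Binv * H.submatrix id Sum.inr = 1)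
    (w : (Fin k ⊕ Fin l) → ZMod 2) :
    w + (Htilde H Binv).mulVec w = g H Binv (w ∘ Sum.inl) := by
  have h1 : (Binv * H).mulVec w
      = (Binv * H.submatrix id Sum.inl).mulVec (w ∘ Sum.inl) + (w ∘ Sum.inr) := by
    rw [← Matrix.mulVec_mulVec, mulVec_sum H w, Matrix.mulVec_add,
      Matrix.mulVec_mulVec, Matrix.mulVec_mulVec, hB', Matrix.one_mulVec]
  funext i
  cases i with
  | inl i => simp [Htilde_mulVec, g]
  | inr i =>
    simp only [Pi.add_apply, Htilde_mulVec, Sum.elim_inr, g, h1]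
    have : ∀ a b : ZMod 2, b + (a + b) = a := by decide
    exact this _ _

lemma hmul_g (hB : H.submatrix id Sum.inr * Binv = 1) (a : Fin k → ZMod 2) :
    H.mulVec (g H Binv a) = 0 := by
  rw [mulVec_sum]
  have h1 : g H Binv a ∘ Sum.inl = a := rfl
  have h2 : g H Binv a ∘ Sum.inr = (Binv * H.submatrix id Sum.inl).mulVec a := rfl
  rw [h1, h2, Matrix.mulVec_mulVec, ← Matrix.mul_assoc, hB, Matrix.one_mul]
  exact add_self _


lemma of_code (hB' : Binv * H.submatrix id Sum.inr = 1)
    {c : (Fin k ⊕ Fin l) → ZMod 2} (hc : H.mulVec c = 0) :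
    g H Binv (c ∘ Sum.inl) = c := by
  have h0 : Binv.mulVec (H.mulVec c) = 0 := by rw [hc, Matrix.mulVec_zero]
  rw [mulVec_sum, Matrix.mulVec_add, Matrix.mulVec_mulVec, Matrix.mulVec_mulVec, hB',
    Matrix.one_mulVec] at h0
  funext i
  cases i with
  | inl i => rfl
  | inr i =>
    have := congrFun h0 i
    simp only [Pi.add_apply, Pi.zero_apply] at this
    exact eq_of_add_eq_zero this

lemma g_inj : Function.Injective (g H Binv) := fun a b hab => by
  have := congrArg (fun f => f ∘ Sum.inl) hab
  simpa [g] using this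

lemma hfilter (hB : H.submatrix id Sum.inr * Binv = 1)
    (hB' : Binv * H.submatrix id Sum.inr = 1) :
    Finset.univ.filter (fun c : (Fin k ⊕ Fin l) → ZMod 2 => H.mulVec c = 0)
      = Finset.univ.image (g H Binv) := by
  ext c
  simp only [Finset.mem_filter, Finset.mem_image, Finset.mem_univ, true_and]
  constructor
  · intro hc; exact ⟨c ∘ Sum.inl, of_code H Binv hB' hc⟩
  · rintro ⟨a, rfl⟩; exact hmul_g H Binv hB a

lemma hcard (hB : H.submatrix id Sum.inr * Binv = 1)
    (hB' : Binv * H.submatrix id Sum.inr = 1) :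
    (Finset.univ.filter (fun c : (Fin k ⊕ Fin l) → ZMod 2 => H.mulVec c = 0)).card
      = 2 ^ k := by
  rw [hfilter H Binv hB hB', Finset.card_image_of_injective _ (g_inj H Binv)]
  simp [Fintype.card_fun, ZMod.card]

end SW

/-- **Slepian–Wolf from a point-to-point code.**  Let `(Xⁿ,Yⁿ)` be i.i.d.
with law `p(x,y)` and `Vⁿ` i.i.d. uniform on `F₂` independent of `(Xⁿ,Yⁿ)`.
With `Zⁿ = H̃Xⁿ ⊕ Vⁿ ⊕ H̃Vⁿ` and `X̂ⁿ = φ(Zⁿ,Yⁿ) ⊕ Zⁿ`, the error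
probability `P{X̂ⁿ ≠ Xⁿ}` equals `ε`, the error probability of the
point-to-point code `φ` over the symmetrized channel: `ε` is the probability
that `φ(Ũⁿ,Ỹⁿ) ≠ C̃ⁿ` where `C̃ⁿ` is uniform on the codebook and,
given `C̃ⁿ = cⁿ`, the pairs `(Ũᵢ,Ỹᵢ)` are independent with
`P{Ũᵢ = u, Ỹᵢ = y} = p(cᵢ ⊕ u, y)`. -/
theorem stmt5 (k l : ℕ) (hl : 0 < l)
    (H : Matrix (Fin l) (Fin k ⊕ Fin l) (ZMod 2))
    (Binv : Matrix (Fin l) (Fin l) (ZMod 2))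
    (hB : H.submatrix id Sum.inr * Binv = 1)
    (hB' : Binv * H.submatrix id Sum.inr = 1)
    (𝒴 : Type) [Fintype 𝒴]
    (p : ZMod 2 → 𝒴 → ℝ) (hp0 : ∀ x y, 0 ≤ p x y)
    (hp1 : ∑ x : ZMod 2, ∑ y : 𝒴, p x y = 1)
    (φ : ((Fin k ⊕ Fin l) → ZMod 2) → ((Fin k ⊕ Fin l) → 𝒴) →
          ((Fin k ⊕ Fin l) → ZMod 2))
    (ε : ℝ)
    (hε : ∑ c : (Fin k ⊕ Fin l) → ZMod 2, ∑ u : (Fin k ⊕ Fin l) → ZMod 2,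
        ∑ y : (Fin k ⊕ Fin l) → 𝒴,
        (if H.mulVec c = 0 ∧ φ u y ≠ c then
          ((1 : ℝ) / ((Finset.univ.filter
              (fun c' : (Fin k ⊕ Fin l) → ZMod 2 => H.mulVec c' = 0)).card : ℝ)) *
            ∏ i, p (c i + u i) (y i)
        else 0) = ε) :
    ∑ x : (Fin k ⊕ Fin l) → ZMod 2, ∑ v : (Fin k ⊕ Fin l) → ZMod 2,
      ∑ y : (Fin k ⊕ Fin l) → 𝒴,
      (if φ ((Htilde H Binv).mulVec x + v + (Htilde H Binv).mulVec v) y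
            + ((Htilde H Binv).mulVec x + v + (Htilde H Binv).mulVec v) ≠ x then
        (∏ i, p (x i) (y i)) * ((1 : ℝ) / 2 ^ (k + l))
      else 0) = ε := by
  classical
  rw [← hε]
  have hzz : ∀ a b : ZMod 2, a + (a + b) = b := by decide
  -- RHS (channel-code error) in common form
  have hR : (∑ c : (Fin k ⊕ Fin l) → ZMod 2, ∑ u : (Fin k ⊕ Fin l) → ZMod 2,
        ∑ y : (Fin k ⊕ Fin l) → 𝒴,
        (if H.mulVec c = 0 ∧ φ u y ≠ c then
          ((1 : ℝ) / ((Finset.univ.filter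
              (fun c' : (Fin k ⊕ Fin l) → ZMod 2 => H.mulVec c' = 0)).card : ℝ)) *
            ∏ i, p (c i + u i) (y i)
        else 0))
      = ∑ a : Fin k → ZMod 2, ∑ x : (Fin k ⊕ Fin l) → ZMod 2,
        ∑ y : (Fin k ⊕ Fin l) → 𝒴,
        (if φ (SW.g H Binv a + x) y ≠ SW.g H Binv a then
          (∏ i, p (x i) (y i)) * ((1 : ℝ) / 2 ^ k) else 0) := by
    simp only [SW.hcard H Binv hB hB', ite_and, Finset.sum_ite_irrel,
      Finset.sum_const_zero]
    rw [← Finset.sum_filter, SW.hfilter H Binv hB hB',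
      Finset.sum_image (fun a _ b _ h => SW.g_inj H Binv h)]
    refine Finset.sum_congr rfl fun a _ => ?_
    rw [← Fintype.sum_equiv (Equiv.addLeft (SW.g H Binv a))
      (fun x => ∑ y : (Fin k ⊕ Fin l) → 𝒴,
        (if φ (SW.g H Binv a + x) y ≠ SW.g H Binv a then
          ((1 : ℝ) / ((2 ^ k : ℕ) : ℝ)) *
            ∏ i, p (SW.g H Binv a i + (SW.g H Binv a + x) i) (y i) else 0))
      _ (fun x => rfl)]
    refine Finset.sum_congr rfl fun x _ => Finset.sum_congr rfl fun y _ => ?_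
    simp only [Pi.add_apply, hzz]
    push_cast
    rw [mul_comm]
  -- LHS (Slepian-Wolf error) in common form
  have hLx : ∀ x : (Fin k ⊕ Fin l) → ZMod 2,
      (∑ v : (Fin k ⊕ Fin l) → ZMod 2, ∑ y : (Fin k ⊕ Fin l) → 𝒴,
      (if φ ((Htilde H Binv).mulVec x + v + (Htilde H Binv).mulVec v) y
            + ((Htilde H Binv).mulVec x + v + (Htilde H Binv).mulVec v) ≠ x then
        (∏ i, p (x i) (y i)) * ((1 : ℝ) / 2 ^ (k + l))
      else 0))
      = ∑ a : Fin k → ZMod 2, ∑ y : (Fin k ⊕ Fin l) → 𝒴,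
        (if φ (SW.g H Binv a + x) y ≠ SW.g H Binv a then
          (∏ i, p (x i) (y i)) * ((1 : ℝ) / 2 ^ k) else 0) := by
    intro x
    have Zlem : ∀ w : (Fin k ⊕ Fin l) → ZMod 2,
        (Htilde H Binv).mulVec x + (x + w) + (Htilde H Binv).mulVec (x + w)
          = x + SW.g H Binv (w ∘ Sum.inl) := by
      intro w
      rw [Matrix.mulVec_add]
      have h2 : (Htilde H Binv).mulVec x + (x + w)
            + ((Htilde H Binv).mulVec x + (Htilde H Binv).mulVec w)
          = x + (w + (Htilde H Binv).mulVec w)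
            + ((Htilde H Binv).mulVec x + (Htilde H Binv).mulVec x) := by abel
      rw [h2, SW.add_self, add_zero, SW.key H Binv hB' w]
    have hcond : ∀ (b z : (Fin k ⊕ Fin l) → ZMod 2), (b + (x + z) = x) ↔ b = z := by
      intro b z
      have hz : z + (x + z) = x := by
        have h3 : z + (x + z) = x + (z + z) := by abel
        rw [h3, SW.add_self, add_zero]
      constructor
      · intro h; exact add_right_cancel (h.trans hz.symm)
      · intro h; rw [h, hz]
    calc (∑ v : (Fin k ⊕ Fin l) → ZMod 2, ∑ y : (Fin k ⊕ Fin l) → 𝒴,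
      (if φ ((Htilde H Binv).mulVec x + v + (Htilde H Binv).mulVec v) y
            + ((Htilde H Binv).mulVec x + v + (Htilde H Binv).mulVec v) ≠ x then
        (∏ i, p (x i) (y i)) * ((1 : ℝ) / 2 ^ (k + l))
      else 0))
        = ∑ w : (Fin k ⊕ Fin l) → ZMod 2, ∑ y : (Fin k ⊕ Fin l) → 𝒴,
          (if φ (x + SW.g H Binv (w ∘ Sum.inl)) y ≠ SW.g H Binv (w ∘ Sum.inl) then
            (∏ i, p (x i) (y i)) * ((1 : ℝ) / 2 ^ (k + l)) else 0) := by
          rw [← Fintype.sum_equiv (Equiv.addLeft x)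
            (fun w => ∑ y : (Fin k ⊕ Fin l) → 𝒴,
              (if φ ((Htilde H Binv).mulVec x + (x + w) + (Htilde H Binv).mulVec (x + w)) y
                    + ((Htilde H Binv).mulVec x + (x + w) + (Htilde H Binv).mulVec (x + w)) ≠ x then
                (∏ i, p (x i) (y i)) * ((1 : ℝ) / 2 ^ (k + l)) else 0))
            _ (fun w => rfl)]
          refine Finset.sum_congr rfl fun w _ => Finset.sum_congr rfl fun y _ => ?_
          rw [Zlem w]
          exact if_congr (not_congr (hcond _ _)) rfl rfl
      _ = ∑ q : (Fin k → ZMod 2) × (Fin l → ZMod 2), ∑ y : (Fin k ⊕ Fin l) → 𝒴,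
          (if φ (x + SW.g H Binv q.1) y ≠ SW.g H Binv q.1 then
            (∏ i, p (x i) (y i)) * ((1 : ℝ) / 2 ^ (k + l)) else 0) :=
          Fintype.sum_equiv (Equiv.sumArrowEquivProdArrow (Fin k) (Fin l) (ZMod 2))
            _ _ (fun w => rfl)
      _ = ∑ a : Fin k → ZMod 2, ((2 ^ l : ℕ) : ℝ) * ∑ y : (Fin k ⊕ Fin l) → 𝒴,
          (if φ (x + SW.g H Binv a) y ≠ SW.g H Binv a then
            (∏ i, p (x i) (y i)) * ((1 : ℝ) / 2 ^ (k + l)) else 0) := by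
          rw [Fintype.sum_prod_type]
          refine Finset.sum_congr rfl fun a _ => ?_
          show (∑ _b : Fin l → ZMod 2, ∑ y : (Fin k ⊕ Fin l) → 𝒴,
            (if φ (x + SW.g H Binv a) y ≠ SW.g H Binv a then
              (∏ i, p (x i) (y i)) * ((1 : ℝ) / 2 ^ (k + l)) else 0)) = _
          rw [Finset.sum_const, nsmul_eq_mul]
          congr 1
          simp [Fintype.card_fun, ZMod.card]
      _ = ∑ a : Fin k → ZMod 2, ∑ y : (Fin k ⊕ Fin l) → 𝒴,
          (if φ (SW.g H Binv a + x) y ≠ SW.g H Binv a then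
            (∏ i, p (x i) (y i)) * ((1 : ℝ) / 2 ^ k) else 0) := by
          refine Finset.sum_congr rfl fun a _ => ?_
          rw [Finset.mul_sum, add_comm x (SW.g H Binv a)]
          refine Finset.sum_congr rfl fun y _ => ?_
          rw [mul_ite, mul_zero]
          refine if_congr Iff.rfl ?_ rfl
          push_cast
          rw [pow_add]
          field_simp
  calc (∑ x : (Fin k ⊕ Fin l) → ZMod 2, ∑ v : (Fin k ⊕ Fin l) → ZMod 2,
      ∑ y : (Fin k ⊕ Fin l) → 𝒴,
      (if φ ((Htilde H Binv).mulVec x + v + (Htilde H Binv).mulVec v) y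
            + ((Htilde H Binv).mulVec x + v + (Htilde H Binv).mulVec v) ≠ x then
        (∏ i, p (x i) (y i)) * ((1 : ℝ) / 2 ^ (k + l))
      else 0))
      = ∑ x : (Fin k ⊕ Fin l) → ZMod 2, ∑ a : Fin k → ZMod 2,
        ∑ y : (Fin k ⊕ Fin l) → 𝒴,
        (if φ (SW.g H Binv a + x) y ≠ SW.g H Binv a then
          (∏ i, p (x i) (y i)) * ((1 : ℝ) / 2 ^ k) else 0) :=
        Finset.sum_congr rfl fun x _ => hLx x
    _ = ∑ a : Fin k → ZMod 2, ∑ x : (Fin k ⊕ Fin l) → ZMod 2,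
        ∑ y : (Fin k ⊕ Fin l) → 𝒴,
        (if φ (SW.g H Binv a + x) y ≠ SW.g H Binv a then
          (∏ i, p (x i) (y i)) * ((1 : ℝ) / 2 ^ k) else 0) := Finset.sum_comm
    _ = _ := hR.symm
end

section
/- Let Cⁿ be uniform on the codebook C and Vⁿ i.i.d. uniform on F₂, independent of Cⁿ; set Xⁿ = Cⁿ ⊕ Vⁿ and, conditionally on Xⁿ, let Y₁,…,Yₙ be independent with Yᵢ distributed according to p(·|Xᵢ). Define Ĉⁿ = ψ(pad(HVⁿ), Yⁿ) ⊕ Vⁿ. Then P{Ĉⁿ ≠ Cⁿ} = ε. (A point-to-point channel code built from a Slepian–Wolf code by dithering has average error probability exactly equal to that of the Slepian–Wolf code.) -/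
/-- `pad w` is the vector of `F₂ⁿ` whose first `k` entries are `0` and whose
last `n − k` entries are `w`; coordinates are indexed by `Fin k ⊕ Fin l`
(so `n = k + l`). -/
def pad {k l : ℕ} (w : Fin l → ZMod 2) : (Fin k ⊕ Fin l) → ZMod 2 :=
  Sum.elim (fun _ => 0) w

/-- **Point-to-point code from a Slepian–Wolf code.**  Let `Cⁿ` be uniform on
the codebook `C = {c : Hc = 0}` and `Vⁿ` i.i.d. uniform on `F₂` independent of
`Cⁿ`; set `Xⁿ = Cⁿ ⊕ Vⁿ` and, given `Xⁿ`, let `Yᵢ` be independent with law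
`p(·|Xᵢ)`.  With `Ĉⁿ = ψ(pad(HVⁿ), Yⁿ) ⊕ Vⁿ`, the error probability
`P{Ĉⁿ ≠ Cⁿ}` equals `ε`, the error probability of the Slepian–Wolf code:
for `(X̃ⁿ,Ỹⁿ)` i.i.d. with `P{X̃ᵢ=x, Ỹᵢ=y} = (1/2)p(y|x)`,
`ε = P{ψ(pad(HX̃ⁿ), Ỹⁿ) ≠ X̃ⁿ}`. -/
theorem stmt6 (k l : ℕ) (hl : 0 < l)
    (H : Matrix (Fin l) (Fin k ⊕ Fin l) (ZMod 2))
    (𝒴 : Type) [Fintype 𝒴]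
    (ch : ZMod 2 → 𝒴 → ℝ) (hch0 : ∀ x y, 0 ≤ ch x y)
    (hch1 : ∀ x, ∑ y : 𝒴, ch x y = 1)
    (ψ : ((Fin k ⊕ Fin l) → ZMod 2) → ((Fin k ⊕ Fin l) → 𝒴) →
          ((Fin k ⊕ Fin l) → ZMod 2))
    (ε : ℝ)
    (hε : ∑ x : (Fin k ⊕ Fin l) → ZMod 2, ∑ y : (Fin k ⊕ Fin l) → 𝒴,
        (if ψ (pad (H.mulVec x)) y ≠ x then
          ∏ i, ((1 : ℝ) / 2) * ch (x i) (y i)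
        else 0) = ε) :
    ∑ c : (Fin k ⊕ Fin l) → ZMod 2, ∑ v : (Fin k ⊕ Fin l) → ZMod 2,
      ∑ y : (Fin k ⊕ Fin l) → 𝒴,
      (if H.mulVec c = 0 ∧ ψ (pad (H.mulVec v)) y + v ≠ c then
        ((1 : ℝ) / ((Finset.univ.filter
            (fun c' : (Fin k ⊕ Fin l) → ZMod 2 => H.mulVec c' = 0)).card : ℝ)) *
          ((1 : ℝ) / 2 ^ (k + l)) * ∏ i, ch ((c + v) i) (y i)
      else 0) = ε := by
  classical
  set S := Finset.univ.filter
      (fun c' : (Fin k ⊕ Fin l) → ZMod 2 => H.mulVec c' = 0) with hS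
  have h0 : (0 : (Fin k ⊕ Fin l) → ZMod 2) ∈ S := by
    simp [hS, Matrix.mulVec_zero]
  have hN : (0:ℝ) < (S.card : ℝ) := by
    exact_mod_cast Finset.card_pos.mpr ⟨0, h0⟩
  have hself : ∀ a b : (Fin k ⊕ Fin l) → ZMod 2, a + (a + b) = b := by
    intro a b; funext i
    have : ∀ x y : ZMod 2, x + (x + y) = y := by decide
    exact this (a i) (b i)
  have key : ∀ c : (Fin k ⊕ Fin l) → ZMod 2, H.mulVec c = 0 →
      (∑ v : (Fin k ⊕ Fin l) → ZMod 2, ∑ y : (Fin k ⊕ Fin l) → 𝒴,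
        (if ψ (pad (H.mulVec v)) y + v ≠ c then
          ((1:ℝ) / (S.card:ℝ)) * ((1:ℝ)/2^(k+l)) * ∏ i, ch ((c+v) i) (y i)
        else 0)) = ((1:ℝ)/(S.card:ℝ)) * ε := by
    intro c hc
    rw [← hε, Finset.mul_sum]
    apply Fintype.sum_bijective (fun x : (Fin k ⊕ Fin l) → ZMod 2 => c + x)
    · exact (Equiv.addLeft c).bijective
    intro x
    rw [Finset.mul_sum]
    apply Finset.sum_congr rfl
    intro y _
    have hxx : ∀ a b : (Fin k ⊕ Fin l) → ZMod 2, a + b + b = a := by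
      intro a b; funext i
      have : ∀ p q : ZMod 2, p + q + q = p := by decide
      exact this (a i) (b i)
    have h1 : H.mulVec (c + x) = H.mulVec x := by
      rw [Matrix.mulVec_add, hc, zero_add]
    rw [h1]
    have hcond : (ψ (pad (H.mulVec x)) y + x ≠ c)
        ↔ (ψ (pad (H.mulVec x)) y ≠ c + x) := by
      set a := ψ (pad (H.mulVec x)) y
      constructor
      · intro h hx; apply h; rw [hx]; exact hxx c x
      · intro h hx; apply h
        have : (a + x) + x = a := hxx a x
        rw [hx] at this; exact this.symm
    have hprod : (∏ i, ((1:ℝ)/2) * ch ((c+x) i) (y i))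
        = ((1:ℝ)/2^(k+l)) * ∏ i, ch ((c+x) i) (y i) := by
      rw [Finset.prod_mul_distrib, Finset.prod_const]
      simp [Finset.card_univ, div_pow]
    by_cases hcnd : ψ (pad (H.mulVec x)) y ≠ c + x
    · rw [if_pos (hcond.mpr hcnd), if_pos hcnd, hprod]; ring
    · rw [if_neg (fun hh => hcnd (hcond.mp hh)), if_neg hcnd, mul_zero]
  have step : ∀ c : (Fin k ⊕ Fin l) → ZMod 2,
      (∑ v : (Fin k ⊕ Fin l) → ZMod 2, ∑ y : (Fin k ⊕ Fin l) → 𝒴,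
        (if H.mulVec c = 0 ∧ ψ (pad (H.mulVec v)) y + v ≠ c then
          ((1:ℝ) / (S.card:ℝ)) * ((1:ℝ)/2^(k+l)) * ∏ i, ch ((c+v) i) (y i)
        else 0))
      = if H.mulVec c = 0 then ((1:ℝ)/(S.card:ℝ)) * ε else 0 := by
    intro c
    by_cases hc : H.mulVec c = 0
    · rw [if_pos hc, ← key c hc]
      apply Finset.sum_congr rfl; intro v _
      apply Finset.sum_congr rfl; intro y _
      simp [hc]
    · rw [if_neg hc]
      apply Finset.sum_eq_zero; intro v _
      apply Finset.sum_eq_zero; intro y _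
      simp [hc]
  calc ∑ c : (Fin k ⊕ Fin l) → ZMod 2, ∑ v : (Fin k ⊕ Fin l) → ZMod 2,
      ∑ y : (Fin k ⊕ Fin l) → 𝒴,
      (if H.mulVec c = 0 ∧ ψ (pad (H.mulVec v)) y + v ≠ c then
        ((1 : ℝ) / (S.card : ℝ)) *
          ((1 : ℝ) / 2 ^ (k + l)) * ∏ i, ch ((c + v) i) (y i)
      else 0)
      = ∑ c : (Fin k ⊕ Fin l) → ZMod 2,
          (if H.mulVec c = 0 then ((1:ℝ)/(S.card:ℝ)) * ε else 0) :=
        Finset.sum_congr rfl (fun c _ => step c)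
    _ = (S.card : ℝ) * (((1:ℝ)/(S.card:ℝ)) * ε) := by
        rw [← Finset.sum_filter, ← hS, Finset.sum_const, nsmul_eq_mul]
    _ = ε := by field_simp
end

section
/- Let D ∈ (0,1/2) and let φ: F₂ⁿ → F₂ⁿ have shaping distance at most δ with respect to BSC(D). Then for Xⁿ i.i.d. uniform on F₂, the normalized expected distortion satisfies (1/n)·E[d_H(Xⁿ, φ(Xⁿ))] ≤ D + δ. (Distortion guarantee of the lossy source coding scheme for a symmetric Bernoulli(1/2) source.) -/
open Finset

lemma prodeq (n : ℕ) (D : ℝ) (x y : Fin n → ZMod 2) :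
    D ^ hammingDist x y * (1 - D) ^ (n - hammingDist x y)
      = ∏ i, (if x i = y i then 1 - D else D) := by
  rw [Finset.prod_ite, Finset.prod_const, Finset.prod_const]
  have h1 : (Finset.univ.filter fun i => ¬ x i = y i).card = hammingDist x y := rfl
  have h2 : (Finset.univ.filter fun i => x i = y i).card = n - hammingDist x y := by
    have := Finset.card_filter_add_card_filter_not (s := (Finset.univ : Finset (Fin n)))
      (p := fun i => x i = y i)
    simp [h1] at this
    omega
  rw [h1, h2, mul_comm]

lemma zmodsum (D : ℝ) (b : ZMod 2) :
    ∑ a : ZMod 2, (if a = b then (1-D:ℝ) else D) = 1 := by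
  have h : (Finset.univ : Finset (ZMod 2)) = {0, 1} := by decide
  rw [h, Finset.sum_insert (by decide), Finset.sum_singleton]
  rcases (show b = 0 ∨ b = 1 by revert b; decide) with rfl | rfl <;> norm_num [show (1 : ZMod 2) ≠ 0 from by decide, show (0 : ZMod 2) ≠ 1 from by decide]

lemma zmodsum2 (D : ℝ) (b : ZMod 2) :
    ∑ a : ZMod 2, (if a = b then (1-D:ℝ) else D) * (if a = b then (0:ℝ) else 1) = D := by
  have h : (Finset.univ : Finset (ZMod 2)) = {0, 1} := by decide
  rw [h, Finset.sum_insert (by decide), Finset.sum_singleton]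
  rcases (show b = 0 ∨ b = 1 by revert b; decide) with rfl | rfl <;> norm_num [show (1 : ZMod 2) ≠ 0 from by decide, show (0 : ZMod 2) ≠ 1 from by decide]

lemma sumone (n : ℕ) (D : ℝ) (y : Fin n → ZMod 2) :
    ∑ x : Fin n → ZMod 2, ∏ i, (if x i = y i then 1 - D else D) = 1 := by
  have := Finset.prod_univ_sum (fun _ : Fin n => (Finset.univ : Finset (ZMod 2)))
    (fun i a => if a = y i then (1-D:ℝ) else D)
  rw [Fintype.piFinset_univ] at this
  rw [← this]
  simp [zmodsum]

lemma summean (n : ℕ) (D : ℝ) (y : Fin n → ZMod 2) :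
    ∑ x : Fin n → ZMod 2, (∏ i, (if x i = y i then 1 - D else D)) * (hammingDist x y : ℝ)
      = n * D := by
  have disteq : ∀ x : Fin n → ZMod 2,
      (hammingDist x y : ℝ) = ∑ i, (if x i = y i then (0:ℝ) else 1) := by
    intro x
    rw [Finset.sum_ite, Finset.sum_const, Finset.sum_const]
    simp [hammingDist]
  have key : ∀ i : Fin n,
      ∑ x : Fin n → ZMod 2,
        (∏ j, (if x j = y j then 1 - D else D)) * (if x i = y i then (0:ℝ) else 1) = D := by
    intro i
    have h1 : ∀ x : Fin n → ZMod 2,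
        (∏ j, (if x j = y j then 1 - D else D)) * (if x i = y i then (0:ℝ) else 1)
        = ∏ j, ((if x j = y j then 1 - D else D)
            * (if j = i then (if x j = y j then (0:ℝ) else 1) else 1)) := by
      intro x
      rw [Finset.prod_mul_distrib]
      congr 1
      rw [Finset.prod_ite_eq' Finset.univ i (fun j => if x j = y j then (0:ℝ) else 1)]
      simp
    simp_rw [h1]
    have hps := Finset.prod_univ_sum (fun _ : Fin n => (Finset.univ : Finset (ZMod 2)))
      (fun j a => (if a = y j then (1-D:ℝ) else D)
          * (if j = i then (if a = y j then (0:ℝ) else 1) else 1))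
    rw [Fintype.piFinset_univ] at hps
    rw [← hps]
    have h2 : ∀ j : Fin n, (∑ a : ZMod 2, (if a = y j then (1-D:ℝ) else D)
        * (if j = i then (if a = y j then (0:ℝ) else 1) else 1)) = if j = i then D else 1 := by
      intro j
      by_cases hj : j = i
      · subst hj
        simpa using zmodsum2 D (y j)
      · simp only [hj, if_neg hj]
        simp [zmodsum]
    simp_rw [h2]
    rw [Finset.prod_ite_eq' Finset.univ i (fun _ => D)]
    simp
  simp_rw [disteq, Finset.mul_sum]
  rw [Finset.sum_comm]
  simp_rw [key]
  simp [mul_comm]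

lemma ptwise (nn a d' : ℝ) (h0 : 0 ≤ d') (h1 : d' ≤ nn) :
    a * d' ≤ nn / 2 * (a + |a|) := by
  rcases abs_cases a with ⟨h2, h3⟩ | ⟨h2, h3⟩ <;> nlinarith

/-- **Lossy source coding of a symmetric source.**  Let `D ∈ (0,1/2)` and let
`φ : F₂ⁿ → F₂ⁿ` have shaping distance at most `δ` with respect to `BSC(D)`:
the total variation distance between the joint law of `(φ(Yⁿ), Yⁿ)` for `Yⁿ`
i.i.d. uniform and the i.i.d. `2^{−n} D^{d_H}(1−D)^{n−d_H}` distribution is at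
most `δ`.  Then for `Xⁿ` i.i.d. uniform on `F₂`,
`(1/n)·E[d_H(Xⁿ, φ(Xⁿ))] ≤ D + δ`. -/
theorem stmt7 (n : ℕ) (hn : 0 < n) (D δ : ℝ) (hD : D ∈ Set.Ioo (0 : ℝ) (1 / 2))
    (φ : (Fin n → ZMod 2) → (Fin n → ZMod 2))
    (hδ : (1 / 2) * ∑ x : Fin n → ZMod 2, ∑ y : Fin n → ZMod 2,
        |(if φ y = x then (1 : ℝ) / 2 ^ n else 0)
          - ((1 : ℝ) / 2 ^ n) * D ^ (hammingDist x y)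
              * (1 - D) ^ (n - hammingDist x y)| ≤ δ) :
    (1 / (n : ℝ)) * ∑ x : Fin n → ZMod 2,
        ((1 : ℝ) / 2 ^ n) * (hammingDist x (φ x) : ℝ) ≤ D + δ := by
  have hcard : (Finset.univ : Finset (Fin n → ZMod 2)).card = 2 ^ n := by
    simp [Finset.card_univ]
  -- rewrite goal sum as double sum over (y, x) of q * d
  have goal_eq : (∑ x : Fin n → ZMod 2, ((1 : ℝ) / 2 ^ n) * (hammingDist x (φ x) : ℝ))
      = ∑ y : Fin n → ZMod 2, ∑ x : Fin n → ZMod 2,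
          (if φ y = x then (1 : ℝ) / 2 ^ n else 0) * (hammingDist x y : ℝ) := by
    apply Finset.sum_congr rfl
    intro y _
    simp_rw [ite_mul, zero_mul]
    rw [Finset.sum_ite_eq Finset.univ (φ y) (fun x => (1:ℝ)/2^n * (hammingDist x y : ℝ))]
    simp [hammingDist_comm]
  rw [goal_eq]
  -- mass of q is 1
  have hq1 : ∑ y : Fin n → ZMod 2, ∑ x : Fin n → ZMod 2,
      (if φ y = x then (1 : ℝ) / 2 ^ n else 0) = 1 := by
    have : ∀ y : Fin n → ZMod 2, ∑ x : Fin n → ZMod 2,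
        (if φ y = x then (1 : ℝ) / 2 ^ n else 0) = (1:ℝ)/2^n := by
      intro y
      rw [Finset.sum_ite_eq Finset.univ (φ y) (fun _ => (1:ℝ)/2^n)]
      simp
    simp_rw [this]
    rw [Finset.sum_const, hcard]
    simp
  -- mass of p is 1
  have hp1 : ∑ y : Fin n → ZMod 2, ∑ x : Fin n → ZMod 2,
      ((1 : ℝ) / 2 ^ n) * D ^ (hammingDist x y) * (1 - D) ^ (n - hammingDist x y) = 1 := by
    have : ∀ y : Fin n → ZMod 2, ∑ x : Fin n → ZMod 2,
        ((1 : ℝ) / 2 ^ n) * D ^ (hammingDist x y) * (1 - D) ^ (n - hammingDist x y)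
          = (1:ℝ)/2^n := by
      intro y
      have : ∀ x : Fin n → ZMod 2,
          ((1 : ℝ) / 2 ^ n) * D ^ (hammingDist x y) * (1 - D) ^ (n - hammingDist x y)
          = ((1 : ℝ) / 2 ^ n) * ∏ i, (if x i = y i then 1 - D else D) := by
        intro x; rw [← prodeq n D x y]; ring
      simp_rw [this, ← Finset.mul_sum, sumone]
      simp
    simp_rw [this]
    rw [Finset.sum_const, hcard]
    simp
  -- mean of d under p is n * D
  have hpd : ∑ y : Fin n → ZMod 2, ∑ x : Fin n → ZMod 2,
      ((1 : ℝ) / 2 ^ n) * D ^ (hammingDist x y) * (1 - D) ^ (n - hammingDist x y)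
        * (hammingDist x y : ℝ) = n * D := by
    have : ∀ y : Fin n → ZMod 2, ∑ x : Fin n → ZMod 2,
        ((1 : ℝ) / 2 ^ n) * D ^ (hammingDist x y) * (1 - D) ^ (n - hammingDist x y)
          * (hammingDist x y : ℝ) = (1:ℝ)/2^n * (n * D) := by
      intro y
      have h3 : ∀ x : Fin n → ZMod 2,
          ((1 : ℝ) / 2 ^ n) * D ^ (hammingDist x y) * (1 - D) ^ (n - hammingDist x y)
            * (hammingDist x y : ℝ)
          = ((1 : ℝ) / 2 ^ n) * ((∏ i, (if x i = y i then 1 - D else D)) * (hammingDist x y : ℝ)) := by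
        intro x; rw [← prodeq n D x y]; ring
      simp_rw [h3, ← Finset.mul_sum, summean]
    simp_rw [this]
    rw [Finset.sum_const, hcard]
    simp
  -- abs sum bound
  have habs : ∑ y : Fin n → ZMod 2, ∑ x : Fin n → ZMod 2,
      |(if φ y = x then (1 : ℝ) / 2 ^ n else 0)
        - ((1 : ℝ) / 2 ^ n) * D ^ (hammingDist x y)
            * (1 - D) ^ (n - hammingDist x y)| ≤ 2 * δ := by
    rw [Finset.sum_comm]
    linarith
  -- key bound on the double sum
  have key : ∑ y : Fin n → ZMod 2, ∑ x : Fin n → ZMod 2,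
      (if φ y = x then (1 : ℝ) / 2 ^ n else 0) * (hammingDist x y : ℝ)
      ≤ n * D + n * δ := by
    have step : ∀ y x : Fin n → ZMod 2,
        (if φ y = x then (1 : ℝ) / 2 ^ n else 0) * (hammingDist x y : ℝ)
        ≤ ((1 : ℝ) / 2 ^ n) * D ^ (hammingDist x y) * (1 - D) ^ (n - hammingDist x y)
            * (hammingDist x y : ℝ)
          + (n : ℝ) / 2 * (((if φ y = x then (1 : ℝ) / 2 ^ n else 0)
              - ((1 : ℝ) / 2 ^ n) * D ^ (hammingDist x y)
                  * (1 - D) ^ (n - hammingDist x y))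
            + |(if φ y = x then (1 : ℝ) / 2 ^ n else 0)
              - ((1 : ℝ) / 2 ^ n) * D ^ (hammingDist x y)
                  * (1 - D) ^ (n - hammingDist x y)|) := by
      intro y x
      have hd0 : (0:ℝ) ≤ (hammingDist x y : ℝ) := Nat.cast_nonneg _
      have hdn : (hammingDist x y : ℝ) ≤ n := by
        have h := hammingDist_le_card_fintype (x := x) (y := y)
        simp only [Fintype.card_fin] at h
        exact_mod_cast h
      nlinarith [ptwise (n:ℝ) ((if φ y = x then (1 : ℝ) / 2 ^ n else 0)
        - ((1 : ℝ) / 2 ^ n) * D ^ (hammingDist x y)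
            * (1 - D) ^ (n - hammingDist x y)) ((hammingDist x y : ℝ)) hd0 hdn]
    calc ∑ y : Fin n → ZMod 2, ∑ x : Fin n → ZMod 2,
        (if φ y = x then (1 : ℝ) / 2 ^ n else 0) * (hammingDist x y : ℝ)
        ≤ ∑ y : Fin n → ZMod 2, ∑ x : Fin n → ZMod 2,
          (((1 : ℝ) / 2 ^ n) * D ^ (hammingDist x y) * (1 - D) ^ (n - hammingDist x y)
            * (hammingDist x y : ℝ)
          + (n : ℝ) / 2 * (((if φ y = x then (1 : ℝ) / 2 ^ n else 0)
              - ((1 : ℝ) / 2 ^ n) * D ^ (hammingDist x y)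
                  * (1 - D) ^ (n - hammingDist x y))
            + |(if φ y = x then (1 : ℝ) / 2 ^ n else 0)
              - ((1 : ℝ) / 2 ^ n) * D ^ (hammingDist x y)
                  * (1 - D) ^ (n - hammingDist x y)|)) := by
          apply Finset.sum_le_sum; intro y _
          apply Finset.sum_le_sum; intro x _
          exact step y x
      _ ≤ n * D + n * δ := by
          simp only [Finset.sum_add_distrib]
          rw [hpd]
          have expand : ∑ y : Fin n → ZMod 2, ∑ x : Fin n → ZMod 2,
              (n : ℝ) / 2 * (((if φ y = x then (1 : ℝ) / 2 ^ n else 0)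
                - ((1 : ℝ) / 2 ^ n) * D ^ (hammingDist x y)
                    * (1 - D) ^ (n - hammingDist x y))
              + |(if φ y = x then (1 : ℝ) / 2 ^ n else 0)
                - ((1 : ℝ) / 2 ^ n) * D ^ (hammingDist x y)
                    * (1 - D) ^ (n - hammingDist x y)|)
              = (n:ℝ)/2 * ((∑ y : Fin n → ZMod 2, ∑ x : Fin n → ZMod 2,
                  ((if φ y = x then (1 : ℝ) / 2 ^ n else 0)
                  - ((1 : ℝ) / 2 ^ n) * D ^ (hammingDist x y)
                      * (1 - D) ^ (n - hammingDist x y)))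
                + ∑ y : Fin n → ZMod 2, ∑ x : Fin n → ZMod 2,
                  |(if φ y = x then (1 : ℝ) / 2 ^ n else 0)
                  - ((1 : ℝ) / 2 ^ n) * D ^ (hammingDist x y)
                      * (1 - D) ^ (n - hammingDist x y)|) := by
            simp_rw [← Finset.sum_add_distrib, Finset.mul_sum]
          rw [expand]
          have hzero : (∑ y : Fin n → ZMod 2, ∑ x : Fin n → ZMod 2,
              ((if φ y = x then (1 : ℝ) / 2 ^ n else 0)
              - ((1 : ℝ) / 2 ^ n) * D ^ (hammingDist x y)
                  * (1 - D) ^ (n - hammingDist x y))) = 0 := by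
            simp_rw [Finset.sum_sub_distrib]
            rw [hq1, hp1]  -- maybe need restructure
            ring
          rw [hzero]
          have hn' : (0:ℝ) ≤ (n:ℝ)/2 := by positivity
          nlinarith [habs]
  -- finish
  have hnpos : (0:ℝ) < n := by exact_mod_cast hn
  calc (1 / (n:ℝ)) * ∑ y : Fin n → ZMod 2, ∑ x : Fin n → ZMod 2,
      (if φ y = x then (1 : ℝ) / 2 ^ n else 0) * (hammingDist x y : ℝ)
      ≤ (1 / (n:ℝ)) * (n * D + n * δ) := by
        apply mul_le_mul_of_nonneg_left key
        positivity
    _ = D + δ := by field_simp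
end

section
/- Let p(x̃,ỹ) be a pmf on F₂×𝒴 (𝒴 finite) and let φ: 𝒴ⁿ × F₂ⁿ → F₂ⁿ be a decoder for the symmetrized channel p̄ with shaping distance at most δ. Let Ỹⁿ be i.i.d. with law p(ỹ) (the 𝒴-marginal of p), let Ṽⁿ be i.i.d. uniform on F₂ independent of Ỹⁿ, and set Ũⁿ = φ(Ỹⁿ,Ṽⁿ) ⊕ Ṽⁿ. Then (1/2)·∑_{ũⁿ,ỹⁿ} |P{Ũⁿ = ũⁿ, Ỹⁿ = ỹⁿ} − ∏_{i=1}^{n} p(ũᵢ, ỹᵢ)| ≤ δ. (Lemma 3.) -/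
private lemma stmt8_aux {α β : Type*} [Fintype α] [AddGroup α] [Fintype β]
    (f : α → β → α → ℝ) :
    ∑ u : α, ∑ y : β, ∑ v : α, f (u + v) y v
      = ∑ x : α, ∑ y : β, ∑ v : α, f x y v := by
  rw [Finset.sum_comm]
  conv_rhs => rw [Finset.sum_comm]
  refine Finset.sum_congr rfl fun y _ => ?_
  rw [Finset.sum_comm]
  conv_rhs => rw [Finset.sum_comm]
  refine Finset.sum_congr rfl fun v _ => ?_
  exact Equiv.sum_comp (Equiv.addRight v) fun x => f x y v

/-- **Lemma 3.**  Let `p(x̃,ỹ)` be a pmf on `F₂ × 𝒴` and let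
`φ : 𝒴ⁿ × F₂ⁿ → F₂ⁿ` be a decoder for the symmetrized channel
`p̄(ỹ,ṽ|x̃) = p(x̃⊕ṽ, ỹ)` with shaping distance at most `δ`: the total
variation distance between the law of `(φ(Ỹⁿ,Ṽⁿ), Ỹⁿ, Ṽⁿ)` — where `Ỹⁿ` is
i.i.d. with the `𝒴`-marginal of `p` and `Ṽⁿ` is i.i.d. uniform on `F₂`
independent of `Ỹⁿ` — and `2^{−n} ∏ᵢ p̄(ỹᵢ,ṽᵢ|x̃ᵢ)` is at most `δ`.
Then with `Ũⁿ = φ(Ỹⁿ,Ṽⁿ) ⊕ Ṽⁿ`,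
`(1/2)·∑_{ũⁿ,ỹⁿ} |P{Ũⁿ = ũⁿ, Ỹⁿ = ỹⁿ} − ∏ᵢ p(ũᵢ,ỹᵢ)| ≤ δ`. -/
theorem stmt8 (n : ℕ) (𝒴 : Type) [Fintype 𝒴] (δ : ℝ)
    (p : ZMod 2 → 𝒴 → ℝ) (hp0 : ∀ x y, 0 ≤ p x y)
    (hp1 : ∑ x : ZMod 2, ∑ y : 𝒴, p x y = 1)
    (φ : (Fin n → 𝒴) → (Fin n → ZMod 2) → (Fin n → ZMod 2))
    (hδ : (1 / 2) * ∑ x : Fin n → ZMod 2, ∑ y : Fin n → 𝒴, ∑ v : Fin n → ZMod 2,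
        |(if φ y v = x then
            ∏ i, (∑ x' : ZMod 2, p x' (y i)) * ((1 : ℝ) / 2)
          else 0)
          - ((1 : ℝ) / 2 ^ n) * ∏ i, p (x i + v i) (y i)| ≤ δ) :
    (1 / 2) * ∑ u : Fin n → ZMod 2, ∑ y : Fin n → 𝒴,
      |(∑ v : Fin n → ZMod 2,
          if φ y v + v = u then
            ∏ i, (∑ x' : ZMod 2, p x' (y i)) * ((1 : ℝ) / 2)
          else 0)
        - ∏ i, p (u i) (y i)| ≤ δ := by
  have hvv : ∀ v : Fin n → ZMod 2, v + v = 0 := fun v =>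
    funext fun i => CharTwo.add_self_eq_zero _
  set Q : (Fin n → 𝒴) → ℝ := fun y => ∏ i, (∑ x' : ZMod 2, p x' (y i)) * ((1 : ℝ) / 2)
    with hQ
  have key : ∀ (u : Fin n → ZMod 2) (y : Fin n → 𝒴),
      |(∑ v : Fin n → ZMod 2, if φ y v + v = u then Q y else 0) - ∏ i, p (u i) (y i)|
      ≤ ∑ v : Fin n → ZMod 2,
          |(if φ y v = u + v then Q y else 0)
            - ((1 : ℝ) / 2 ^ n) * ∏ i, p ((u + v) i + v i) (y i)| := by
    intro u y
    have hprod : ∀ v : Fin n → ZMod 2,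
        ∏ i, p ((u + v) i + v i) (y i) = ∏ i, p (u i) (y i) := by
      intro v
      refine Finset.prod_congr rfl fun i _ => ?_
      congr 1
      show u i + v i + v i = u i
      rw [add_assoc, CharTwo.add_self_eq_zero, add_zero]
    have h1 : ∏ i, p (u i) (y i)
        = ∑ v : Fin n → ZMod 2, ((1 : ℝ) / 2 ^ n) * ∏ i, p ((u + v) i + v i) (y i) := by
      simp only [hprod, Finset.sum_const, Finset.card_univ, nsmul_eq_mul]
      have hcard : (Fintype.card (Fin n → ZMod 2) : ℝ) = 2 ^ n := by
        simp [Fintype.card_fun]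
      rw [hcard]
      field_simp
    rw [h1, ← Finset.sum_sub_distrib]
    refine (Finset.abs_sum_le_sum_abs _ _).trans (le_of_eq ?_)
    refine Finset.sum_congr rfl fun v _ => ?_
    have hiff : (φ y v + v = u) ↔ (φ y v = u + v) := by
      constructor
      · intro h; rw [← h, add_assoc, hvv, add_zero]
      · intro h; rw [h, add_assoc, hvv, add_zero]
    simp only [hiff]
  calc (1 / 2) * ∑ u : Fin n → ZMod 2, ∑ y : Fin n → 𝒴,
      |(∑ v : Fin n → ZMod 2, if φ y v + v = u then Q y else 0) - ∏ i, p (u i) (y i)|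
      ≤ (1 / 2) * ∑ u : Fin n → ZMod 2, ∑ y : Fin n → 𝒴, ∑ v : Fin n → ZMod 2,
          |(if φ y v = u + v then Q y else 0)
            - ((1 : ℝ) / 2 ^ n) * ∏ i, p ((u + v) i + v i) (y i)| := by
        refine mul_le_mul_of_nonneg_left ?_ (by norm_num)
        exact Finset.sum_le_sum fun u _ => Finset.sum_le_sum fun y _ => key u y
    _ = (1 / 2) * ∑ x : Fin n → ZMod 2, ∑ y : Fin n → 𝒴, ∑ v : Fin n → ZMod 2,
          |(if φ y v = x then Q y else 0)
            - ((1 : ℝ) / 2 ^ n) * ∏ i, p (x i + v i) (y i)| := by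
        exact congrArg (HMul.hMul ((1 : ℝ) / 2))
          (stmt8_aux fun x y v =>
            |(if φ y v = x then Q y else 0)
              - ((1 : ℝ) / 2 ^ n) * ∏ i, p (x i + v i) (y i)|)
    _ ≤ δ := hδ
end

section
/- Let Xⁿ be i.i.d. Bern(θ) and Vⁿ i.i.d. uniform on F₂, independent of Xⁿ. Define Uⁿ = φ₁(Xⁿ,Vⁿ) ⊕ Vⁿ and X̂ⁿ = φ₂(pad₂(H₁Vⁿ, QUⁿ)). Then the total variation distance between the joint law of (Xⁿ, X̂ⁿ) and the i.i.d. product ∏_{i=1}^{n} p(xᵢ, x̂ᵢ) is at most δ + ε. (Lemma 4: the lossy source coding scheme for an asymmetric source produces a source–reconstruction pair within δ+ε of the target i.i.d. joint distribution.) -/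
/-- The Bernoulli pmf on `F₂`: `bern r x = r^x (1−r)^{1−x}`. -/
noncomputable def bern (r : ℝ) (x : ZMod 2) : ℝ :=
  r ^ x.val * (1 - r) ^ (1 - x.val)

/-- The target source–reconstruction joint pmf
`p(x,x̂) = α^{x̂}(1−α)^{1−x̂} D^{x⊕x̂}(1−D)^{1−x⊕x̂}` on `F₂²`. -/
noncomputable def targetP (α D : ℝ) (x xh : ZMod 2) : ℝ :=
  bern α xh * bern D (x + xh)

/-- `pad₂ w m` is the vector of `F₂ⁿ` whose first `k₂` entries are `0`,
followed by `w ∈ F₂^{n−k₁}` and then `m ∈ F₂^{k₁−k₂}`.  Coordinates are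
indexed by `Fin a ⊕ Fin b ⊕ Fin c` with `a = k₂`, `b = n−k₁`, `c = k₁−k₂`
(so `n = a+b+c`, `k₁ = a+c`, `k₂ = a`). -/
def pad₂ {a b c : ℕ} (w : Fin b → ZMod 2) (m : Fin c → ZMod 2) :
    (Fin a ⊕ Fin b ⊕ Fin c) → ZMod 2 :=
  Sum.elim (fun _ => 0) (Sum.elim w m)

lemma keyTV {V W : Type*} [Fintype V] [Fintype W] [DecidableEq W]
    (P : V → ℝ) (T : V → W → ℝ) (hT0 : ∀ x w, 0 ≤ T x w)
    (g : W → W) (ψ : V → V → W) (κ δ ε : ℝ)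
    (hδ : (1/2) * ∑ u : W, ∑ x : V, ∑ v : V,
        |(if ψ x v = u then P x else 0) - κ * T x u| ≤ δ)
    (hκ : ∀ (x : V) (u : W), (∑ _v : V, κ * T x u) = T x u)
    (hε : ∑ u : W, (if g u ≠ u then ∑ x : V, T x u else 0) ≤ ε) :
    (1/2) * ∑ x : V, ∑ xh : W,
      |(∑ v : V, if g (ψ x v) = xh then P x else 0) - T x xh| ≤ δ + ε := by
  classical
  set A : V → W → ℝ := fun x xh => ∑ v : V, if g (ψ x v) = xh then P x else 0 with hA
  set B : V → W → ℝ := fun x xh => ∑ u : W, if g u = xh then T x u else 0 with hB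
  have hAeq : ∀ x xh, A x xh
      = ∑ u : W, ∑ v : V, (if g u = xh then (if ψ x v = u then P x else 0) else 0) := by
    intro x xh
    rw [Finset.sum_comm]
    apply Finset.sum_congr rfl; intro v _
    have h1 : ∀ u : W, (if g u = xh then (if ψ x v = u then P x else 0) else 0)
        = if ψ x v = u then (if g u = xh then P x else 0) else 0 := by
      intro u; by_cases h1 : g u = xh <;> by_cases h2 : ψ x v = u <;> simp [h1, h2]
    simp_rw [h1]
    rw [Finset.sum_ite_eq]
    simp
  have hBeq : ∀ x xh, B x xh
      = ∑ u : W, ∑ v : V, (if g u = xh then κ * T x u else 0) := by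
    intro x xh
    apply Finset.sum_congr rfl; intro u _
    by_cases h : g u = xh <;> simp [h, hκ x u]
  -- δ part
  have hδ' : (1/2) * ∑ x : V, ∑ u : W, ∑ v : V,
      |(if ψ x v = u then P x else 0) - κ * T x u| ≤ δ := by
    rw [Finset.sum_comm]; exact hδ
  have hpart1 : (1/2) * ∑ x : V, ∑ xh : W, |A x xh - B x xh| ≤ δ := by
    refine le_trans ?_ hδ'
    have hmain : ∀ x : V, ∑ xh : W, |A x xh - B x xh|
        ≤ ∑ u : W, ∑ v : V, |(if ψ x v = u then P x else 0) - κ * T x u| := by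
      intro x
      calc ∑ xh : W, |A x xh - B x xh|
          ≤ ∑ xh : W, ∑ u : W, ∑ v : V,
              (if g u = xh then |(if ψ x v = u then P x else 0) - κ * T x u| else 0) := by
            apply Finset.sum_le_sum; intro xh _
            rw [hAeq, hBeq, ← Finset.sum_sub_distrib]
            refine le_trans (Finset.abs_sum_le_sum_abs _ _) ?_
            apply Finset.sum_le_sum; intro u _
            rw [← Finset.sum_sub_distrib]
            refine le_trans (Finset.abs_sum_le_sum_abs _ _) ?_
            apply Finset.sum_le_sum; intro v _
            by_cases h : g u = xh <;> simp [h]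
        _ = ∑ u : W, ∑ v : V, |(if ψ x v = u then P x else 0) - κ * T x u| := by
            rw [Finset.sum_comm]
            apply Finset.sum_congr rfl; intro u _
            rw [Finset.sum_comm]
            apply Finset.sum_congr rfl; intro v _
            rw [Finset.sum_ite_eq]
            simp
    have h2 : ∑ x : V, ∑ xh : W, |A x xh - B x xh|
        ≤ ∑ x : V, ∑ u : W, ∑ v : V, |(if ψ x v = u then P x else 0) - κ * T x u| :=
      Finset.sum_le_sum (fun x _ => hmain x)
    linarith [h2]
  -- ε part
  have hpart2 : (1/2) * ∑ x : V, ∑ xh : W, |B x xh - T x xh| ≤ ε := by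
    have hxh : ∀ x, ∑ xh : W, |B x xh - T x xh|
        ≤ 2 * ∑ u : W, (if g u ≠ u then T x u else 0) := by
      intro x
      have hsplit : ∀ xh, |B x xh - T x xh|
          ≤ (∑ u : W, if g u = xh ∧ g u ≠ u then T x u else 0)
            + (if g xh ≠ xh then T x xh else 0) := by
        intro xh
        have hBdec : B x xh = (∑ u : W, if g u = xh ∧ g u ≠ u then T x u else 0)
            + (if g xh = xh then T x xh else 0) := by
          rw [hB]
          show (∑ u : W, if g u = xh then T x u else 0)
              = (∑ u : W, if g u = xh ∧ g u ≠ u then T x u else 0)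
                + (if g xh = xh then T x xh else 0)
          have key : ∀ u : W, (if g u = xh then T x u else 0)
              = (if g u = xh ∧ g u ≠ u then T x u else 0)
                + (if u = xh then (if g xh = xh then T x xh else 0) else 0) := by
            intro u
            by_cases h2 : u = xh
            · subst h2
              by_cases h1 : g u = u <;> simp [h1]
            · by_cases h1 : g u = xh
              · have h3 : g u ≠ u := fun hh => h2 ((h1.symm.trans hh).symm)
                have h4 : ¬ xh = u := fun hh => h2 hh.symm
                simp [h1, h3, h2, h4]
              · simp [h1, h2]
          rw [Finset.sum_congr rfl (fun u _ => key u)]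
          rw [Finset.sum_add_distrib, Finset.sum_ite_eq']
          simp
        have h1 : 0 ≤ ∑ u : W, (if g u = xh ∧ g u ≠ u then T x u else 0) := by
          apply Finset.sum_nonneg; intro u _
          split
          · exact hT0 x u
          · exact le_rfl
        have h2 : 0 ≤ (if g xh ≠ xh then T x xh else 0) := by
          split
          · exact hT0 x xh
          · exact le_rfl
        have h3 : (if g xh = xh then T x xh else 0) - T x xh
            = - (if g xh ≠ xh then T x xh else 0) := by
          by_cases h : g xh = xh <;> simp [h]
        rw [hBdec, add_sub_assoc, h3]
        refine abs_le.mpr ⟨by linarith, by linarith⟩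
      calc ∑ xh : W, |B x xh - T x xh|
          ≤ ∑ xh : W, ((∑ u : W, if g u = xh ∧ g u ≠ u then T x u else 0)
            + (if g xh ≠ xh then T x xh else 0)) := Finset.sum_le_sum (fun xh _ => hsplit xh)
        _ = 2 * ∑ u : W, (if g u ≠ u then T x u else 0) := by
            rw [Finset.sum_add_distrib]
            have e1 : ∑ xh : W, ∑ u : W, (if g u = xh ∧ g u ≠ u then T x u else 0)
                = ∑ u : W, (if g u ≠ u then T x u else 0) := by
              rw [Finset.sum_comm]
              apply Finset.sum_congr rfl; intro u _
              have key : ∀ xh : W, (if g u = xh ∧ g u ≠ u then T x u else 0)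
                  = if g u = xh then (if g u ≠ u then T x u else 0) else 0 := by
                intro xh
                by_cases h1 : g u = xh <;> by_cases h2 : g u = u <;> simp [h1, h2]
              simp_rw [key]
              rw [Finset.sum_ite_eq]
              simp
            rw [e1]
            ring
    have h2 : ∑ x : V, ∑ xh : W, |B x xh - T x xh|
        ≤ ∑ x : V, 2 * ∑ u : W, (if g u ≠ u then T x u else 0) :=
      Finset.sum_le_sum (fun x _ => hxh x)
    have h3 : ∑ x : V, ∑ u : W, (if g u ≠ u then T x u else 0)
        = ∑ u : W, (if g u ≠ u then ∑ x : V, T x u else 0) := by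
      rw [Finset.sum_comm]
      apply Finset.sum_congr rfl; intro u _
      by_cases h : g u ≠ u <;> simp [h]
    have h4 : ∑ x : V, 2 * ∑ u : W, (if g u ≠ u then T x u else 0)
        = 2 * ∑ u : W, (if g u ≠ u then ∑ x : V, T x u else 0) := by
      rw [← Finset.mul_sum, h3]
    linarith [h2, h4, hε]
  have htri : ∀ x xh, |A x xh - T x xh| ≤ |A x xh - B x xh| + |B x xh - T x xh| :=
    fun x xh => abs_sub_le _ _ _
  have h5 : ∑ x : V, ∑ xh : W, |A x xh - T x xh|
      ≤ ∑ x : V, ∑ xh : W, (|A x xh - B x xh| + |B x xh - T x xh|) :=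
    Finset.sum_le_sum fun x _ => Finset.sum_le_sum fun xh _ => htri x xh
  have h6 : ∑ x : V, ∑ xh : W, (|A x xh - B x xh| + |B x xh - T x xh|)
      = (∑ x : V, ∑ xh : W, |A x xh - B x xh|)
        + ∑ x : V, ∑ xh : W, |B x xh - T x xh| := by
    simp_rw [Finset.sum_add_distrib]
  linarith [h5, h6]

lemma bern_nonneg {r : ℝ} (h0 : 0 ≤ r) (h1 : r ≤ 1) (x : ZMod 2) : 0 ≤ bern r x :=
  mul_nonneg (pow_nonneg h0 _) (pow_nonneg (by linarith) _)

lemma targetP_nonneg {α D : ℝ} (h0 : 0 ≤ α) (h1 : α ≤ 1) (h2 : 0 ≤ D) (h3 : D ≤ 1)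
    (x xh : ZMod 2) : 0 ≤ targetP α D x xh :=
  mul_nonneg (bern_nonneg h0 h1 _) (bern_nonneg h2 h3 _)

lemma sum_bern (r : ℝ) : ∑ s : ZMod 2, bern r s = 1 := by
  have huniv : (Finset.univ : Finset (ZMod 2)) = {0, 1} := by decide
  rw [huniv, Finset.sum_pair (by decide : (0 : ZMod 2) ≠ 1)]
  simp [bern, ZMod.val_zero, ZMod.val_one]

lemma sum_targetP (α D : ℝ) (w : ZMod 2) : ∑ s : ZMod 2, targetP α D s w = bern α w := by
  unfold targetP
  rw [← Finset.mul_sum]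
  have : ∑ s : ZMod 2, bern D (s + w) = ∑ s : ZMod 2, bern D s :=
    Equiv.sum_comp (Equiv.addRight w) (bern D)
  rw [this, sum_bern, mul_one]

/-- **Lemma 4.**  Lossy source coding of an asymmetric `Bern(θ)` source from a
point-to-point channel code `φ₁` (with codebook `C₁ = ker H₁` and shaping
distance ≤ `δ` for the symmetrized channel `p̄(x,v|x̂) = p(x, x̂⊕v)`) and a
lossless source code `φ₂` (with error probability ≤ `ε` on a `Bern(α)`
source).  With `Xⁿ` i.i.d. `Bern(θ)`, `Vⁿ` i.i.d. uniform independent of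
`Xⁿ`, `Uⁿ = φ₁(Xⁿ,Vⁿ) ⊕ Vⁿ`, and `X̂ⁿ = φ₂(pad₂(H₁Vⁿ, QUⁿ))`, the total
variation distance between the joint law of `(Xⁿ, X̂ⁿ)` and the i.i.d.
product `∏ᵢ p(xᵢ, x̂ᵢ)` is at most `δ + ε`. -/
theorem stmt9 (a b c : ℕ) (hb : 0 < b) (hc : 0 < c)
    (θ D α δ ε : ℝ) (hθ : θ ∈ Set.Ioo (0 : ℝ) (1 / 2)) (hD : D ∈ Set.Ioo 0 θ)
    (hα : α = (θ - D) / (1 - 2 * D))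
    (H₁ : Matrix (Fin b) (Fin a ⊕ Fin b ⊕ Fin c) (ZMod 2))
    (Q : Matrix (Fin c) (Fin a ⊕ Fin b ⊕ Fin c) (ZMod 2))
    (φ₁ : ((Fin a ⊕ Fin b ⊕ Fin c) → ZMod 2) →
          ((Fin a ⊕ Fin b ⊕ Fin c) → ZMod 2) →
          ((Fin a ⊕ Fin b ⊕ Fin c) → ZMod 2))
    (hφ₁C : ∀ x v, H₁.mulVec (φ₁ x v) = 0)
    (hδ : (1 / 2) * ∑ u : (Fin a ⊕ Fin b ⊕ Fin c) → ZMod 2,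
        ∑ x : (Fin a ⊕ Fin b ⊕ Fin c) → ZMod 2,
        ∑ v : (Fin a ⊕ Fin b ⊕ Fin c) → ZMod 2,
        |(if φ₁ x v = u then
            (∏ i, bern θ (x i)) * ((1 : ℝ) / 2 ^ (a + b + c))
          else 0)
          - ∏ i, ((1 : ℝ) / 2) * targetP α D (x i) (u i + v i)| ≤ δ)
    (φ₂ : ((Fin a ⊕ Fin b ⊕ Fin c) → ZMod 2) →
          ((Fin a ⊕ Fin b ⊕ Fin c) → ZMod 2))
    (hε : ∑ u : (Fin a ⊕ Fin b ⊕ Fin c) → ZMod 2,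
        (if φ₂ (pad₂ (H₁.mulVec u) (Q.mulVec u)) ≠ u then
          ∏ i, bern α (u i)
        else 0) ≤ ε) :
    (1 / 2) * ∑ x : (Fin a ⊕ Fin b ⊕ Fin c) → ZMod 2,
      ∑ xh : (Fin a ⊕ Fin b ⊕ Fin c) → ZMod 2,
      |(∑ v : (Fin a ⊕ Fin b ⊕ Fin c) → ZMod 2,
          if φ₂ (pad₂ (H₁.mulVec v) (Q.mulVec (φ₁ x v + v))) = xh then
            (∏ i, bern θ (x i)) * ((1 : ℝ) / 2 ^ (a + b + c))
          else 0)
        - ∏ i, targetP α D (x i) (xh i)| ≤ δ + ε := by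
  classical
  obtain ⟨hθ0, hθ2⟩ := hθ
  obtain ⟨hD0, hDθ⟩ := hD
  have hD2 : D < 1 / 2 := lt_trans hDθ hθ2
  have h12D : 0 < 1 - 2 * D := by linarith
  have hα0 : 0 ≤ α := by rw [hα]; exact div_nonneg (by linarith) h12D.le
  have hα1 : α ≤ 1 := by rw [hα, div_le_one h12D]; linarith
  have hT0 : ∀ x w : ((Fin a ⊕ Fin b ⊕ Fin c) → ZMod 2), 0 ≤ (∏ i, targetP α D (x i) (w i)) := fun x w =>
    Finset.prod_nonneg fun i _ =>
      mul_nonneg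
        (mul_nonneg (pow_nonneg hα0 _) (pow_nonneg (by linarith) _))
        (mul_nonneg (pow_nonneg hD0.le _) (pow_nonneg (by linarith) _))
  have hcardI : Fintype.card (Fin a ⊕ Fin b ⊕ Fin c) = a + b + c := by
    simp [add_assoc]
  have hcardV : Fintype.card ((Fin a ⊕ Fin b ⊕ Fin c) → ZMod 2) = 2 ^ (a + b + c) := by
    rw [Fintype.card_fun, ZMod.card, hcardI]
  have hvv : ∀ v : ((Fin a ⊕ Fin b ⊕ Fin c) → ZMod 2), v + v = 0 := fun v => funext fun i => CharTwo.add_self_eq_zero _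
  have hκ' : ∀ (x u : ((Fin a ⊕ Fin b ⊕ Fin c) → ZMod 2)), (∑ _v : ((Fin a ⊕ Fin b ⊕ Fin c) → ZMod 2), ((1 : ℝ) / 2) ^ (a + b + c) * (∏ i, targetP α D (x i) (u i))) = (∏ i, targetP α D (x i) (u i)) := by
    intro x u
    rw [Finset.sum_const, Finset.card_univ, hcardV, nsmul_eq_mul]
    push_cast
    rw [← mul_assoc, ← mul_pow]
    norm_num
  have hprod : ∀ (x u : ((Fin a ⊕ Fin b ⊕ Fin c) → ZMod 2)), (∏ i, ((1 : ℝ) / 2) * targetP α D (x i) (u i))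
      = ((1 : ℝ) / 2) ^ (a + b + c) * (∏ i, targetP α D (x i) (u i)) := by
    intro x u
    rw [Finset.prod_mul_distrib, Finset.prod_const, Finset.card_univ, hcardI]
  have hEq : ∀ x v : ((Fin a ⊕ Fin b ⊕ Fin c) → ZMod 2), (∑ u : ((Fin a ⊕ Fin b ⊕ Fin c) → ZMod 2), |(if φ₁ x v + v = u then (∏ i, bern θ (x i)) * ((1 : ℝ) / 2 ^ (a + b + c)) else 0)
        - ((1 : ℝ) / 2) ^ (a + b + c) * (∏ i, targetP α D (x i) (u i))|)
      = ∑ u : ((Fin a ⊕ Fin b ⊕ Fin c) → ZMod 2), |(if φ₁ x v = u then (∏ i, bern θ (x i)) * ((1 : ℝ) / 2 ^ (a + b + c)) else 0)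
          - ∏ i, ((1 : ℝ) / 2) * targetP α D (x i) (u i + v i)| := by
    intro x v
    rw [← Equiv.sum_comp (Equiv.addRight v) (fun u : ((Fin a ⊕ Fin b ⊕ Fin c) → ZMod 2) =>
        |(if φ₁ x v = u then (∏ i, bern θ (x i)) * ((1 : ℝ) / 2 ^ (a + b + c)) else 0)
          - ∏ i, ((1 : ℝ) / 2) * targetP α D (x i) (u i + v i)|)]
    apply Finset.sum_congr rfl; intro u _
    simp only [Equiv.coe_addRight]
    have h1 : ((u + v) : ((Fin a ⊕ Fin b ⊕ Fin c) → ZMod 2)) + v = u := by rw [add_assoc, hvv, add_zero]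
    have h2 : (φ₁ x v + v = u) ↔ (φ₁ x v = u + v) := by
      constructor
      · intro h; rw [← h, add_assoc, hvv, add_zero]
      · intro h; rw [h, add_assoc, hvv, add_zero]
    have h3 : (∏ i, ((1 : ℝ) / 2) * targetP α D (x i) ((u + v) i + v i))
        = ((1 : ℝ) / 2) ^ (a + b + c) * (∏ i, targetP α D (x i) (u i)) := by
      have h4 : ∀ i, (u + v) i + v i = u i := fun i => congrFun h1 i
      simp_rw [h4]
      exact hprod x u
    rw [if_congr h2 rfl rfl, h3]
    congr
  have hδ2 : (1 / 2) * ∑ u : ((Fin a ⊕ Fin b ⊕ Fin c) → ZMod 2), ∑ x : ((Fin a ⊕ Fin b ⊕ Fin c) → ZMod 2), ∑ v : ((Fin a ⊕ Fin b ⊕ Fin c) → ZMod 2),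
      |(if φ₁ x v + v = u then (∏ i, bern θ (x i)) * ((1 : ℝ) / 2 ^ (a + b + c)) else 0) - ((1 : ℝ) / 2) ^ (a + b + c) * (∏ i, targetP α D (x i) (u i))| ≤ δ := by
    have hsum := calc
      ∑ u : ((Fin a ⊕ Fin b ⊕ Fin c) → ZMod 2), ∑ x : ((Fin a ⊕ Fin b ⊕ Fin c) → ZMod 2), ∑ v : ((Fin a ⊕ Fin b ⊕ Fin c) → ZMod 2),
          |(if φ₁ x v + v = u then (∏ i, bern θ (x i)) * ((1 : ℝ) / 2 ^ (a + b + c)) else 0) - ((1 : ℝ) / 2) ^ (a + b + c) * (∏ i, targetP α D (x i) (u i))|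
        = ∑ x : ((Fin a ⊕ Fin b ⊕ Fin c) → ZMod 2), ∑ u : ((Fin a ⊕ Fin b ⊕ Fin c) → ZMod 2), ∑ v : ((Fin a ⊕ Fin b ⊕ Fin c) → ZMod 2),
          |(if φ₁ x v + v = u then (∏ i, bern θ (x i)) * ((1 : ℝ) / 2 ^ (a + b + c)) else 0) - ((1 : ℝ) / 2) ^ (a + b + c) * (∏ i, targetP α D (x i) (u i))| :=
          Finset.sum_comm
      _ = ∑ x : ((Fin a ⊕ Fin b ⊕ Fin c) → ZMod 2), ∑ u : ((Fin a ⊕ Fin b ⊕ Fin c) → ZMod 2), ∑ v : ((Fin a ⊕ Fin b ⊕ Fin c) → ZMod 2), |(if φ₁ x v = u then (∏ i, bern θ (x i)) * ((1 : ℝ) / 2 ^ (a + b + c)) else 0)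
            - ∏ i, ((1 : ℝ) / 2) * targetP α D (x i) (u i + v i)| := by
          refine Finset.sum_congr rfl fun x _ => ?_
          calc ∑ u : ((Fin a ⊕ Fin b ⊕ Fin c) → ZMod 2), ∑ v : ((Fin a ⊕ Fin b ⊕ Fin c) → ZMod 2),
              |(if φ₁ x v + v = u then (∏ i, bern θ (x i)) * ((1 : ℝ) / 2 ^ (a + b + c)) else 0) - ((1 : ℝ) / 2) ^ (a + b + c) * (∏ i, targetP α D (x i) (u i))|
              = ∑ v : ((Fin a ⊕ Fin b ⊕ Fin c) → ZMod 2), ∑ u : ((Fin a ⊕ Fin b ⊕ Fin c) → ZMod 2),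
                |(if φ₁ x v + v = u then (∏ i, bern θ (x i)) * ((1 : ℝ) / 2 ^ (a + b + c)) else 0) - ((1 : ℝ) / 2) ^ (a + b + c) * (∏ i, targetP α D (x i) (u i))| :=
                Finset.sum_comm
            _ = ∑ v : ((Fin a ⊕ Fin b ⊕ Fin c) → ZMod 2), ∑ u : ((Fin a ⊕ Fin b ⊕ Fin c) → ZMod 2), |(if φ₁ x v = u then (∏ i, bern θ (x i)) * ((1 : ℝ) / 2 ^ (a + b + c)) else 0)
                  - ∏ i, ((1 : ℝ) / 2) * targetP α D (x i) (u i + v i)| :=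
                Finset.sum_congr rfl fun v _ => hEq x v
            _ = ∑ u : ((Fin a ⊕ Fin b ⊕ Fin c) → ZMod 2), ∑ v : ((Fin a ⊕ Fin b ⊕ Fin c) → ZMod 2), |(if φ₁ x v = u then (∏ i, bern θ (x i)) * ((1 : ℝ) / 2 ^ (a + b + c)) else 0)
                  - ∏ i, ((1 : ℝ) / 2) * targetP α D (x i) (u i + v i)| := Finset.sum_comm
      _ = ∑ u : ((Fin a ⊕ Fin b ⊕ Fin c) → ZMod 2), ∑ x : ((Fin a ⊕ Fin b ⊕ Fin c) → ZMod 2), ∑ v : ((Fin a ⊕ Fin b ⊕ Fin c) → ZMod 2), |(if φ₁ x v = u then (∏ i, bern θ (x i)) * ((1 : ℝ) / 2 ^ (a + b + c)) else 0)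
            - ∏ i, ((1 : ℝ) / 2) * targetP α D (x i) (u i + v i)| := Finset.sum_comm
    rw [hsum]
    exact hδ
  have hTsum : ∀ u : ((Fin a ⊕ Fin b ⊕ Fin c) → ZMod 2), (∑ x : ((Fin a ⊕ Fin b ⊕ Fin c) → ZMod 2), (∏ i, targetP α D (x i) (u i))) = ∏ i, bern α (u i) := by
    intro u
    have h5 := Fintype.prod_sum (fun (i : Fin a ⊕ Fin b ⊕ Fin c) (s : ZMod 2) =>
      targetP α D s (u i))
    rw [← h5]
    exact Finset.prod_congr rfl fun i _ => sum_targetP α D (u i)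
  have hε2 : ∑ u : ((Fin a ⊕ Fin b ⊕ Fin c) → ZMod 2),
      (if φ₂ (pad₂ (H₁.mulVec u) (Q.mulVec u)) ≠ u then ∑ x : ((Fin a ⊕ Fin b ⊕ Fin c) → ZMod 2), (∏ i, targetP α D (x i) (u i)) else 0)
      ≤ ε := by
    refine le_trans (le_of_eq (Finset.sum_congr rfl fun u _ => ?_)) hε
    rw [hTsum u]
  have hgoalrw : ∀ (x v : ((Fin a ⊕ Fin b ⊕ Fin c) → ZMod 2)), (pad₂ (H₁.mulVec v) (Q.mulVec (φ₁ x v + v))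
        : (Fin a ⊕ Fin b ⊕ Fin c) → ZMod 2)
      = pad₂ (H₁.mulVec (φ₁ x v + v)) (Q.mulVec (φ₁ x v + v)) := by
    intro x v
    have h6 : H₁.mulVec (φ₁ x v + v) = H₁.mulVec v := by
      rw [Matrix.mulVec_add, hφ₁C, zero_add]
    rw [h6]
  simp only [hgoalrw]
  exact keyTV (fun x : ((Fin a ⊕ Fin b ⊕ Fin c) → ZMod 2) => (∏ i, bern θ (x i)) * ((1 : ℝ) / 2 ^ (a + b + c))) (fun x w : ((Fin a ⊕ Fin b ⊕ Fin c) → ZMod 2) => (∏ i, targetP α D (x i) (w i))) hT0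
    (fun w : ((Fin a ⊕ Fin b ⊕ Fin c) → ZMod 2) => φ₂ (pad₂ (H₁.mulVec w) (Q.mulVec w)))
    (fun x v : ((Fin a ⊕ Fin b ⊕ Fin c) → ZMod 2) => φ₁ x v + v) (((1 : ℝ) / 2) ^ (a + b + c)) δ ε hδ2 hκ' hε2
end

section
/- Under the lossy source coding construction (Xⁿ i.i.d. Bern(θ), Vⁿ i.i.d. uniform independent of Xⁿ, Uⁿ = φ₁(Xⁿ,Vⁿ) ⊕ Vⁿ, X̂ⁿ = φ₂(pad₂(H₁Vⁿ, QUⁿ))), the normalized expected Hamming distortion satisfies (1/n)·E[d_H(Xⁿ, X̂ⁿ)] ≤ D + δ + ε. -/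
section aux
variable {ι : Type*} [Fintype ι] [DecidableEq ι] {κ : Type*} [Fintype κ]

lemma sum_prod_pi (F : ι → κ → ℝ) :
    ∑ z : ι → κ, ∏ j, F j (z j) = ∏ j, ∑ t, F j t := by
  rw [Finset.prod_univ_sum, Fintype.piFinset_univ]

lemma sum_prod_pi2 {A B : Type*} [Fintype A] [Fintype B] (F : ι → A → B → ℝ) :
    ∑ x : ι → A, ∑ y : ι → B, ∏ i, F i (x i) (y i) = ∏ i, ∑ s, ∑ t, F i s t := by
  calc ∑ x : ι → A, ∑ y : ι → B, ∏ i, F i (x i) (y i)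
      = ∑ x : ι → A, ∏ i, ∑ t, F i (x i) t :=
        Finset.sum_congr rfl fun x _ => sum_prod_pi (fun i t => F i (x i) t)
    _ = ∏ i, ∑ s, ∑ t, F i s t := sum_prod_pi (fun i s => ∑ t, F i s t)

lemma sum_prod_pi3 {A B C : Type*} [Fintype A] [Fintype B] [Fintype C]
    (F : ι → A → B → C → ℝ) :
    ∑ x : ι → A, ∑ y : ι → B, ∑ z : ι → C, ∏ i, F i (x i) (y i) (z i)
      = ∏ i, ∑ s, ∑ t, ∑ r, F i s t r := by
  calc ∑ x : ι → A, ∑ y : ι → B, ∑ z : ι → C, ∏ i, F i (x i) (y i) (z i)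
      = ∑ x : ι → A, ∏ i, ∑ t, ∑ r, F i (x i) t r :=
        Finset.sum_congr rfl fun x _ => sum_prod_pi2 (fun i t r => F i (x i) t r)
    _ = ∏ i, ∑ s, ∑ t, ∑ r, F i s t r := sum_prod_pi (fun i s => ∑ t, ∑ r, F i s t r)

lemma prod_mul_single {A B : Type*} (G h : A → B → ℝ) (i₀ : ι) (x : ι → A) (y : ι → B) :
    (∏ j, G (x j) (y j)) * h (x i₀) (y i₀)
      = ∏ j, (if j = i₀ then G (x j) (y j) * h (x j) (y j) else G (x j) (y j)) := by
  have e : ∀ j : ι, (if j = i₀ then G (x j) (y j) * h (x j) (y j) else G (x j) (y j))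
      = G (x j) (y j) * (if j = i₀ then h (x j) (y j) else 1) := by
    intro j; split <;> ring
  rw [Finset.prod_congr rfl fun j _ => e j, Finset.prod_mul_distrib]
  congr 1
  simp

lemma sum_prod_pi2_single {A B : Type*} [Fintype A] [Fintype B] (G h : A → B → ℝ)
    (hG : ∑ s, ∑ t, G s t = 1) (i₀ : ι) :
    ∑ x : ι → A, ∑ y : ι → B, (∏ j, G (x j) (y j)) * h (x i₀) (y i₀)
      = ∑ s, ∑ t, G s t * h s t := by
  rw [Finset.sum_congr rfl fun x _ => Finset.sum_congr rfl fun y _ =>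
        prod_mul_single G h i₀ x y,
      sum_prod_pi2 (fun j s t => if j = i₀ then G s t * h s t else G s t)]
  have e2 : ∀ j : ι, (∑ s, ∑ t, if j = i₀ then G s t * h s t else G s t)
      = if j = i₀ then (∑ s, ∑ t, G s t * h s t) else 1 := by
    intro j; by_cases hj : j = i₀ <;> simp [hj, hG]
  rw [Finset.prod_congr rfl fun j _ => e2 j]
  simp

lemma exp_sum {A B : Type*} [Fintype A] [Fintype B] (G h : A → B → ℝ)
    (hG : ∑ s, ∑ t, G s t = 1) :
    ∑ x : ι → A, ∑ y : ι → B, (∏ j, G (x j) (y j)) * (∑ i, h (x i) (y i))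
      = (Fintype.card ι : ℝ) * ∑ s, ∑ t, G s t * h s t := by
  calc ∑ x : ι → A, ∑ y : ι → B, (∏ j, G (x j) (y j)) * (∑ i, h (x i) (y i))
      = ∑ x : ι → A, ∑ y : ι → B, ∑ i : ι, (∏ j, G (x j) (y j)) * h (x i) (y i) :=
        Finset.sum_congr rfl fun x _ => Finset.sum_congr rfl fun y _ => Finset.mul_sum _ _ _
    _ = ∑ x : ι → A, ∑ i : ι, ∑ y : ι → B, (∏ j, G (x j) (y j)) * h (x i) (y i) :=
        Finset.sum_congr rfl fun x _ => Finset.sum_comm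
    _ = ∑ i : ι, ∑ x : ι → A, ∑ y : ι → B, (∏ j, G (x j) (y j)) * h (x i) (y i) :=
        Finset.sum_comm
    _ = ∑ _i : ι, ∑ s, ∑ t, G s t * h s t :=
        Finset.sum_congr rfl fun i _ => sum_prod_pi2_single G h hG i
    _ = (Fintype.card ι : ℝ) * ∑ s, ∑ t, G s t * h s t := by
        rw [Finset.sum_const, Finset.card_univ, nsmul_eq_mul]

lemma sum_zmod2 (f : ZMod 2 → ℝ) : ∑ t : ZMod 2, f t = f 0 + f 1 := by
  have : (Finset.univ : Finset (ZMod 2)) = {0, 1} := by decide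
  rw [this]; simp

lemma zval0 : (0 : ZMod 2).val = 0 := rfl
lemma zval1 : (1 : ZMod 2).val = 1 := rfl
lemma z11 : (1 + 1 : ZMod 2) = 0 := by decide
lemma z01 : (0 : ZMod 2) ≠ 1 := by decide
lemma z10 : (1 : ZMod 2) ≠ 0 := by decide

lemma bern_sum (r : ℝ) : ∑ t : ZMod 2, bern r t = 1 := by
  rw [sum_zmod2]; simp [bern, zval0, zval1]

lemma targetP_marg (α D : ℝ) (t : ZMod 2) :
    ∑ s : ZMod 2, targetP α D s t = bern α t := by
  rw [sum_zmod2]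
  rcases (by decide : ∀ t : ZMod 2, t = 0 ∨ t = 1) t with rfl | rfl <;>
    simp [targetP, bern, zval0, zval1, z11] <;> ring

lemma targetP_sum_swap (α D : ℝ) :
    ∑ s : ZMod 2, ∑ t : ZMod 2, targetP α D t s = 1 := by
  simp only [sum_zmod2, targetP, bern, zval0, zval1, z11, add_zero, zero_add]
  norm_num [zval0, zval1, z11]
  ring

end aux

lemma triple_coord (α D : ℝ) :
    ∑ s : ZMod 2, ∑ t : ZMod 2, ∑ r : ZMod 2, ((1:ℝ)/2) * targetP α D t (s + r) = 1 := by
  simp only [sum_zmod2, targetP, bern, zval0, zval1, z11, add_zero, zero_add]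
  norm_num [zval0, zval1, z11]
  ring

lemma targetP_dist (α D N : ℝ) :
    ∑ s : ZMod 2, ∑ t : ZMod 2, targetP α D t s * ((if t = s then (0:ℝ) else 1)/N)
      = D/N := by
  simp only [sum_zmod2, targetP, bern, zval0, zval1, z11, add_zero, zero_add,
    if_pos rfl, if_neg z01, if_neg z10]
  norm_num [zval0, zval1, z11]
  ring

lemma tv_pt (q r f : ℝ) (hf0 : 0 ≤ f) (hf1 : f ≤ 1) :
    q * f ≤ r * f + ((1/2) * |q - r| + (1/2) * q - (1/2) * r) := by
  have h1 : (q - r) * (f - 1/2) ≤ |q - r| * (1/2) := by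
    calc (q - r) * (f - 1/2) ≤ |(q - r) * (f - 1/2)| := le_abs_self _
      _ = |q - r| * |f - 1/2| := abs_mul _ _
      _ ≤ |q - r| * (1/2) := by
          apply mul_le_mul_of_nonneg_left _ (abs_nonneg _)
          rw [abs_le]; constructor <;> linarith
  have h2 : q * f = r * f + ((q - r) * (f - 1/2) + (1/2) * q - (1/2) * r) := by ring
  linarith

lemma main_aux {ι : Type*} [Fintype ι] [DecidableEq ι] (n : ℕ) (hn : Fintype.card ι = n)
    (hnpos : 0 < n) (θ D α δ ε : ℝ)
    (hθ : θ ∈ Set.Ioo (0 : ℝ) (1 / 2)) (hD : D ∈ Set.Ioo 0 θ)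
    (hα : α = (θ - D) / (1 - 2 * D))
    (φ₁ : (ι → ZMod 2) → (ι → ZMod 2) → (ι → ZMod 2))
    (g : (ι → ZMod 2) → (ι → ZMod 2))
    (hδ : (1 / 2) * ∑ u : ι → ZMod 2, ∑ x : ι → ZMod 2, ∑ v : ι → ZMod 2,
        |(if φ₁ x v = u then (∏ i, bern θ (x i)) * ((1 : ℝ) / 2 ^ n) else 0)
          - ∏ i, ((1 : ℝ) / 2) * targetP α D (x i) (u i + v i)| ≤ δ)
    (hε : ∑ u : ι → ZMod 2, (if g u ≠ u then ∏ i, bern α (u i) else 0) ≤ ε) :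
    (1 / (n : ℝ)) * ∑ x : ι → ZMod 2, ∑ v : ι → ZMod 2,
      (∏ i, bern θ (x i)) * ((1 : ℝ) / 2 ^ n) *
        (hammingDist x (g (φ₁ x v + v)) : ℝ) ≤ D + δ + ε := by
  classical
  obtain ⟨hθ0, hθh⟩ := hθ
  obtain ⟨hD0, hDθ⟩ := hD
  have hN0 : (0:ℝ) < (n:ℝ) := by exact_mod_cast hnpos
  have hα0 : 0 ≤ α := by
    rw [hα]; apply div_nonneg <;> linarith
  have hα1 : α ≤ 1 := by
    rw [hα, div_le_one (by linarith)]; linarith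
  have hbern : ∀ r : ℝ, 0 ≤ r → r ≤ 1 → ∀ t, 0 ≤ bern r t := fun r h0 h1 t =>
    mul_nonneg (pow_nonneg h0 _) (pow_nonneg (by linarith) _)
  have hbα : ∀ t, 0 ≤ bern α t := hbern α hα0 hα1
  have htP : ∀ s t, 0 ≤ targetP α D s t := fun s t =>
    mul_nonneg (hbα t) (hbern D (le_of_lt hD0) (by linarith) _)
  have hcardT : Fintype.card (ι → ZMod 2) = 2 ^ n := by
    simp [Fintype.card_fun, hn]
  have hf0 : ∀ (x w : ι → ZMod 2), 0 ≤ (hammingDist x w : ℝ) / (n:ℝ) :=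
    fun x w => div_nonneg (Nat.cast_nonneg _) (le_of_lt hN0)
  have hf1 : ∀ (x w : ι → ZMod 2), (hammingDist x w : ℝ) / (n:ℝ) ≤ 1 := by
    intro x w
    rw [div_le_one hN0]
    exact_mod_cast hn ▸ hammingDist_le_card_fintype
  have swap3 : ∀ F : (ι → ZMod 2) → (ι → ZMod 2) → (ι → ZMod 2) → ℝ,
      ∑ u, ∑ x, ∑ v, F u x v = ∑ x, ∑ v, ∑ u, F u x v := by
    intro F
    rw [Finset.sum_comm]
    exact Finset.sum_congr rfl fun x _ => Finset.sum_comm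
  have hsum_prob : ∑ x : ι → ZMod 2, ∏ i, bern θ (x i) = 1 := by
    rw [sum_prod_pi (fun _ t => bern θ t)]
    simp [bern_sum]
  have hconstv : ∑ _v : ι → ZMod 2, ((1:ℝ)/2^n) = 1 := by
    rw [Finset.sum_const, Finset.card_univ, hcardT, nsmul_eq_mul]
    push_cast
    field_simp
  have sQ : ∑ u : ι → ZMod 2, ∑ x : ι → ZMod 2, ∑ v : ι → ZMod 2,
      (if φ₁ x v = u then (∏ i, bern θ (x i)) * ((1:ℝ)/2^n) else 0) = 1 := by
    rw [swap3]
    have hc : ∀ x v : ι → ZMod 2, ∑ u : ι → ZMod 2,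
        (if φ₁ x v = u then (∏ i, bern θ (x i)) * ((1:ℝ)/2^n) else 0)
        = (∏ i, bern θ (x i)) * ((1:ℝ)/2^n) := by
      intro x v; rw [Finset.sum_ite_eq]; simp
    rw [Finset.sum_congr rfl fun x _ => Finset.sum_congr rfl fun v _ => hc x v]
    calc ∑ x : ι → ZMod 2, ∑ _v : ι → ZMod 2, (∏ i, bern θ (x i)) * ((1:ℝ)/2^n)
        = ∑ x : ι → ZMod 2, (∏ i, bern θ (x i)) * ∑ _v : ι → ZMod 2, ((1:ℝ)/2^n) :=
          Finset.sum_congr rfl fun x _ => (Finset.mul_sum _ _ _).symm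
      _ = 1 := by rw [hconstv]; simpa using hsum_prob
  have sR : ∑ u : ι → ZMod 2, ∑ x : ι → ZMod 2, ∑ v : ι → ZMod 2,
      (∏ i, ((1:ℝ)/2) * targetP α D (x i) (u i + v i)) = 1 := by
    calc ∑ u : ι → ZMod 2, ∑ x : ι → ZMod 2, ∑ v : ι → ZMod 2,
        ∏ i, ((1:ℝ)/2) * targetP α D (x i) (u i + v i)
        = ∏ _i : ι, ∑ s : ZMod 2, ∑ t : ZMod 2, ∑ r : ZMod 2,
            ((1:ℝ)/2) * targetP α D t (s + r) :=
          sum_prod_pi3 (fun _ s t r => ((1:ℝ)/2) * targetP α D t (s + r))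
      _ = ∏ _i : ι, (1:ℝ) := Finset.prod_congr rfl fun i _ => triple_coord α D
      _ = 1 := Finset.prod_const_one
  have TV : ∑ u : ι → ZMod 2, ∑ x : ι → ZMod 2, ∑ v : ι → ZMod 2,
      (if φ₁ x v = u then (∏ i, bern θ (x i)) * ((1:ℝ)/2^n) else 0)
        * ((hammingDist x (g (u + v)) : ℝ)/(n:ℝ))
      ≤ (∑ u : ι → ZMod 2, ∑ x : ι → ZMod 2, ∑ v : ι → ZMod 2,
          (∏ i, ((1:ℝ)/2) * targetP α D (x i) (u i + v i))
            * ((hammingDist x (g (u + v)) : ℝ)/(n:ℝ))) + δ := by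
    have pt : ∀ u x v : ι → ZMod 2,
        (if φ₁ x v = u then (∏ i, bern θ (x i)) * ((1:ℝ)/2^n) else 0)
          * ((hammingDist x (g (u + v)) : ℝ)/(n:ℝ))
        ≤ (∏ i, ((1:ℝ)/2) * targetP α D (x i) (u i + v i))
            * ((hammingDist x (g (u + v)) : ℝ)/(n:ℝ))
          + ((1/2) * |(if φ₁ x v = u then (∏ i, bern θ (x i)) * ((1:ℝ)/2^n) else 0)
              - ∏ i, ((1:ℝ)/2) * targetP α D (x i) (u i + v i)|
            + (1/2) * (if φ₁ x v = u then (∏ i, bern θ (x i)) * ((1:ℝ)/2^n) else 0)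
            - (1/2) * (∏ i, ((1:ℝ)/2) * targetP α D (x i) (u i + v i))) :=
      fun u x v => tv_pt _ _ _ (hf0 x (g (u + v))) (hf1 x (g (u + v)))
    calc ∑ u : ι → ZMod 2, ∑ x : ι → ZMod 2, ∑ v : ι → ZMod 2,
        (if φ₁ x v = u then (∏ i, bern θ (x i)) * ((1:ℝ)/2^n) else 0)
          * ((hammingDist x (g (u + v)) : ℝ)/(n:ℝ))
        ≤ ∑ u : ι → ZMod 2, ∑ x : ι → ZMod 2, ∑ v : ι → ZMod 2,
          ((∏ i, ((1:ℝ)/2) * targetP α D (x i) (u i + v i))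
            * ((hammingDist x (g (u + v)) : ℝ)/(n:ℝ))
          + ((1/2) * |(if φ₁ x v = u then (∏ i, bern θ (x i)) * ((1:ℝ)/2^n) else 0)
              - ∏ i, ((1:ℝ)/2) * targetP α D (x i) (u i + v i)|
            + (1/2) * (if φ₁ x v = u then (∏ i, bern θ (x i)) * ((1:ℝ)/2^n) else 0)
            - (1/2) * (∏ i, ((1:ℝ)/2) * targetP α D (x i) (u i + v i)))) :=
          Finset.sum_le_sum fun u _ => Finset.sum_le_sum fun x _ =>
            Finset.sum_le_sum fun v _ => pt u x v
      _ = (∑ u : ι → ZMod 2, ∑ x : ι → ZMod 2, ∑ v : ι → ZMod 2,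
            (∏ i, ((1:ℝ)/2) * targetP α D (x i) (u i + v i))
              * ((hammingDist x (g (u + v)) : ℝ)/(n:ℝ)))
          + ((1/2) * (∑ u : ι → ZMod 2, ∑ x : ι → ZMod 2, ∑ v : ι → ZMod 2,
              |(if φ₁ x v = u then (∏ i, bern θ (x i)) * ((1:ℝ)/2^n) else 0)
                - ∏ i, ((1:ℝ)/2) * targetP α D (x i) (u i + v i)|)
            + (1/2) * (∑ u : ι → ZMod 2, ∑ x : ι → ZMod 2, ∑ v : ι → ZMod 2,
              (if φ₁ x v = u then (∏ i, bern θ (x i)) * ((1:ℝ)/2^n) else 0))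
            - (1/2) * (∑ u : ι → ZMod 2, ∑ x : ι → ZMod 2, ∑ v : ι → ZMod 2,
              (∏ i, ((1:ℝ)/2) * targetP α D (x i) (u i + v i)))) := by
          simp only [Finset.sum_add_distrib, Finset.sum_sub_distrib, ← Finset.mul_sum]
      _ ≤ _ := by
          rw [sQ, sR]
          linarith [hδ]
  have TR : ∑ u : ι → ZMod 2, ∑ x : ι → ZMod 2, ∑ v : ι → ZMod 2,
      (∏ i, ((1:ℝ)/2) * targetP α D (x i) (u i + v i))
        * ((hammingDist x (g (u + v)) : ℝ)/(n:ℝ))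
      = ∑ w : ι → ZMod 2, ∑ x : ι → ZMod 2,
          (∏ i, targetP α D (x i) (w i)) * ((hammingDist x (g w) : ℝ)/(n:ℝ)) := by
    rw [swap3]
    calc ∑ x : ι → ZMod 2, ∑ v : ι → ZMod 2, ∑ u : ι → ZMod 2,
        (∏ i, ((1:ℝ)/2) * targetP α D (x i) (u i + v i))
          * ((hammingDist x (g (u + v)) : ℝ)/(n:ℝ))
        = ∑ x : ι → ZMod 2, ∑ v : ι → ZMod 2, ∑ w : ι → ZMod 2,
          (∏ i, ((1:ℝ)/2) * targetP α D (x i) (w i))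
            * ((hammingDist x (g w) : ℝ)/(n:ℝ)) := by
          refine Finset.sum_congr rfl fun x _ => Finset.sum_congr rfl fun v _ => ?_
          exact Fintype.sum_equiv (Equiv.addRight v) _ _ (fun u => rfl)
      _ = ∑ x : ι → ZMod 2, ∑ v : ι → ZMod 2, ∑ w : ι → ZMod 2,
          ((1/2:ℝ)^n * ∏ i, targetP α D (x i) (w i))
            * ((hammingDist x (g w) : ℝ)/(n:ℝ)) := by
          refine Finset.sum_congr rfl fun x _ => Finset.sum_congr rfl fun v _ =>
            Finset.sum_congr rfl fun w _ => ?_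
          rw [Finset.prod_mul_distrib, Finset.prod_const, Finset.card_univ, hn]
      _ = ∑ x : ι → ZMod 2, (2^n : ℝ) * ∑ w : ι → ZMod 2,
          ((1/2:ℝ)^n * ∏ i, targetP α D (x i) (w i))
            * ((hammingDist x (g w) : ℝ)/(n:ℝ)) := by
          refine Finset.sum_congr rfl fun x _ => ?_
          rw [Finset.sum_const, Finset.card_univ, hcardT, nsmul_eq_mul]
          push_cast
          ring
      _ = ∑ x : ι → ZMod 2, ∑ w : ι → ZMod 2,
          (∏ i, targetP α D (x i) (w i)) * ((hammingDist x (g w) : ℝ)/(n:ℝ)) := by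
          refine Finset.sum_congr rfl fun x _ => ?_
          rw [Finset.mul_sum]
          refine Finset.sum_congr rfl fun w _ => ?_
          have hp : (2:ℝ)^n * (1/2:ℝ)^n = 1 := by
            rw [← mul_pow]; norm_num
          calc (2^n : ℝ) * (((1/2:ℝ)^n * ∏ i, targetP α D (x i) (w i))
                * ((hammingDist x (g w) : ℝ)/(n:ℝ)))
              = ((2:ℝ)^n * (1/2:ℝ)^n) * ((∏ i, targetP α D (x i) (w i))
                * ((hammingDist x (g w) : ℝ)/(n:ℝ))) := by ring
            _ = (∏ i, targetP α D (x i) (w i))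
                * ((hammingDist x (g w) : ℝ)/(n:ℝ)) := by rw [hp, one_mul]
      _ = ∑ w : ι → ZMod 2, ∑ x : ι → ZMod 2,
          (∏ i, targetP α D (x i) (w i)) * ((hammingDist x (g w) : ℝ)/(n:ℝ)) :=
          Finset.sum_comm
  have hmarg : ∀ w : ι → ZMod 2,
      ∑ x : ι → ZMod 2, ∏ i, targetP α D (x i) (w i) = ∏ i, bern α (w i) := by
    intro w
    calc ∑ x : ι → ZMod 2, ∏ i, targetP α D (x i) (w i)
        = ∏ i, ∑ s : ZMod 2, targetP α D s (w i) :=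
          sum_prod_pi (fun i s => targetP α D s (w i))
      _ = ∏ i, bern α (w i) := Finset.prod_congr rfl fun i _ => targetP_marg α D (w i)
  have ptw : ∀ w : ι → ZMod 2,
      ∑ x : ι → ZMod 2,
        (∏ i, targetP α D (x i) (w i)) * ((hammingDist x (g w) : ℝ)/(n:ℝ))
      ≤ (∑ x : ι → ZMod 2,
          (∏ i, targetP α D (x i) (w i)) * ((hammingDist x w : ℝ)/(n:ℝ)))
        + (if g w ≠ w then ∏ i, bern α (w i) else 0) := by
    intro w
    by_cases hw : g w = w
    · rw [hw, if_neg (by simp), add_zero]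
    · have h1 : ∑ x : ι → ZMod 2,
          (∏ i, targetP α D (x i) (w i)) * ((hammingDist x (g w) : ℝ)/(n:ℝ))
          ≤ ∏ i, bern α (w i) := by
        calc ∑ x : ι → ZMod 2,
            (∏ i, targetP α D (x i) (w i)) * ((hammingDist x (g w) : ℝ)/(n:ℝ))
            ≤ ∑ x : ι → ZMod 2, ∏ i, targetP α D (x i) (w i) :=
              Finset.sum_le_sum fun x _ =>
                mul_le_of_le_one_right (Finset.prod_nonneg fun i _ => htP _ _)
                  (hf1 x (g w))
          _ = ∏ i, bern α (w i) := hmarg w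
      have h2 : 0 ≤ ∑ x : ι → ZMod 2,
          (∏ i, targetP α D (x i) (w i)) * ((hammingDist x w : ℝ)/(n:ℝ)) :=
        Finset.sum_nonneg fun x _ =>
          mul_nonneg (Finset.prod_nonneg fun i _ => htP _ _) (hf0 x w)
      rw [if_pos hw]
      linarith
  have hdsum : ∑ w : ι → ZMod 2, ∑ x : ι → ZMod 2,
      (∏ i, targetP α D (x i) (w i)) * ((hammingDist x w : ℝ)/(n:ℝ)) = D := by
    have hdh : ∀ (w x : ι → ZMod 2), (hammingDist x w : ℝ)/(n:ℝ)
        = ∑ i, ((if x i = w i then (0:ℝ) else 1)/(n:ℝ)) := by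
      intro w x
      rw [hammingDist, Finset.card_filter]
      push_cast
      rw [Finset.sum_div]
      refine Finset.sum_congr rfl fun i _ => ?_
      by_cases h : x i = w i <;> simp [h]
    calc ∑ w : ι → ZMod 2, ∑ x : ι → ZMod 2,
        (∏ i, targetP α D (x i) (w i)) * ((hammingDist x w : ℝ)/(n:ℝ))
        = ∑ w : ι → ZMod 2, ∑ x : ι → ZMod 2,
          (∏ i, targetP α D (x i) (w i))
            * (∑ i, (if x i = w i then (0:ℝ) else 1)/(n:ℝ)) :=
          Finset.sum_congr rfl fun w _ => Finset.sum_congr rfl fun x _ => by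
            rw [hdh w x]
      _ = (Fintype.card ι : ℝ) * ∑ s : ZMod 2, ∑ t : ZMod 2,
          targetP α D t s * ((if t = s then (0:ℝ) else 1)/(n:ℝ)) :=
          exp_sum (fun s t => targetP α D t s)
            (fun s t => (if t = s then (0:ℝ) else 1)/(n:ℝ)) (targetP_sum_swap α D)
      _ = D := by
          rw [targetP_dist, hn]
          field_simp
  have stepA : ∑ u : ι → ZMod 2, ∑ x : ι → ZMod 2, ∑ v : ι → ZMod 2,
      (if φ₁ x v = u then (∏ i, bern θ (x i)) * ((1:ℝ)/2^n) else 0)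
        * ((hammingDist x (g (u + v)) : ℝ)/(n:ℝ))
      = (1 / (n : ℝ)) * ∑ x : ι → ZMod 2, ∑ v : ι → ZMod 2,
        (∏ i, bern θ (x i)) * ((1 : ℝ) / 2 ^ n) *
          (hammingDist x (g (φ₁ x v + v)) : ℝ) := by
    rw [swap3, Finset.mul_sum]
    refine Finset.sum_congr rfl fun x _ => ?_
    rw [Finset.mul_sum]
    refine Finset.sum_congr rfl fun v _ => ?_
    calc ∑ u : ι → ZMod 2,
        (if φ₁ x v = u then (∏ i, bern θ (x i)) * ((1:ℝ)/2^n) else 0)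
          * ((hammingDist x (g (u + v)) : ℝ)/(n:ℝ))
        = ∑ u : ι → ZMod 2,
          (if φ₁ x v = u then (∏ i, bern θ (x i)) * ((1:ℝ)/2^n)
            * ((hammingDist x (g (u + v)) : ℝ)/(n:ℝ)) else 0) :=
          Finset.sum_congr rfl fun u _ => by rw [ite_mul, zero_mul]
      _ = (∏ i, bern θ (x i)) * ((1:ℝ)/2^n)
          * ((hammingDist x (g (φ₁ x v + v)) : ℝ)/(n:ℝ)) := by
          rw [Finset.sum_ite_eq]; simp
      _ = 1 / (n:ℝ) * ((∏ i, bern θ (x i)) * ((1:ℝ)/2^n)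
          * (hammingDist x (g (φ₁ x v + v)) : ℝ)) := by ring
  calc (1 / (n : ℝ)) * ∑ x : ι → ZMod 2, ∑ v : ι → ZMod 2,
      (∏ i, bern θ (x i)) * ((1 : ℝ) / 2 ^ n) *
        (hammingDist x (g (φ₁ x v + v)) : ℝ)
      = ∑ u : ι → ZMod 2, ∑ x : ι → ZMod 2, ∑ v : ι → ZMod 2,
        (if φ₁ x v = u then (∏ i, bern θ (x i)) * ((1:ℝ)/2^n) else 0)
          * ((hammingDist x (g (u + v)) : ℝ)/(n:ℝ)) := stepA.symm
    _ ≤ (∑ u : ι → ZMod 2, ∑ x : ι → ZMod 2, ∑ v : ι → ZMod 2,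
        (∏ i, ((1:ℝ)/2) * targetP α D (x i) (u i + v i))
          * ((hammingDist x (g (u + v)) : ℝ)/(n:ℝ))) + δ := TV
    _ = (∑ w : ι → ZMod 2, ∑ x : ι → ZMod 2,
        (∏ i, targetP α D (x i) (w i)) * ((hammingDist x (g w) : ℝ)/(n:ℝ))) + δ := by
        rw [TR]
    _ ≤ (∑ w : ι → ZMod 2,
        ((∑ x : ι → ZMod 2,
          (∏ i, targetP α D (x i) (w i)) * ((hammingDist x w : ℝ)/(n:ℝ)))
        + (if g w ≠ w then ∏ i, bern α (w i) else 0))) + δ :=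
        add_le_add_left (Finset.sum_le_sum fun w _ => ptw w) δ
    _ = ((∑ w : ι → ZMod 2, ∑ x : ι → ZMod 2,
          (∏ i, targetP α D (x i) (w i)) * ((hammingDist x w : ℝ)/(n:ℝ)))
        + (∑ w : ι → ZMod 2, if g w ≠ w then ∏ i, bern α (w i) else 0)) + δ := by
        rw [Finset.sum_add_distrib]
    _ ≤ (D + ε) + δ := by
        rw [hdsum]
        exact add_le_add_left (add_le_add_right hε D) δ
    _ = D + δ + ε := by ring



/-- **Distortion of the lossy source coding scheme.**  Under the construction
of Lemma 4 (`Xⁿ` i.i.d. `Bern(θ)`, `Vⁿ` i.i.d. uniform independent of `Xⁿ`,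
`Uⁿ = φ₁(Xⁿ,Vⁿ) ⊕ Vⁿ`, `X̂ⁿ = φ₂(pad₂(H₁Vⁿ, QUⁿ))`), the normalized
expected Hamming distortion satisfies `(1/n)·E[d_H(Xⁿ,X̂ⁿ)] ≤ D + δ + ε`. -/
theorem stmt10 (a b c : ℕ) (hb : 0 < b) (hc : 0 < c)
    (θ D α δ ε : ℝ) (hθ : θ ∈ Set.Ioo (0 : ℝ) (1 / 2)) (hD : D ∈ Set.Ioo 0 θ)
    (hα : α = (θ - D) / (1 - 2 * D))
    (H₁ : Matrix (Fin b) (Fin a ⊕ Fin b ⊕ Fin c) (ZMod 2))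
    (Q : Matrix (Fin c) (Fin a ⊕ Fin b ⊕ Fin c) (ZMod 2))
    (φ₁ : ((Fin a ⊕ Fin b ⊕ Fin c) → ZMod 2) →
          ((Fin a ⊕ Fin b ⊕ Fin c) → ZMod 2) →
          ((Fin a ⊕ Fin b ⊕ Fin c) → ZMod 2))
    (hφ₁C : ∀ x v, H₁.mulVec (φ₁ x v) = 0)
    (hδ : (1 / 2) * ∑ u : (Fin a ⊕ Fin b ⊕ Fin c) → ZMod 2,
        ∑ x : (Fin a ⊕ Fin b ⊕ Fin c) → ZMod 2,
        ∑ v : (Fin a ⊕ Fin b ⊕ Fin c) → ZMod 2,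
        |(if φ₁ x v = u then
            (∏ i, bern θ (x i)) * ((1 : ℝ) / 2 ^ (a + b + c))
          else 0)
          - ∏ i, ((1 : ℝ) / 2) * targetP α D (x i) (u i + v i)| ≤ δ)
    (φ₂ : ((Fin a ⊕ Fin b ⊕ Fin c) → ZMod 2) →
          ((Fin a ⊕ Fin b ⊕ Fin c) → ZMod 2))
    (hε : ∑ u : (Fin a ⊕ Fin b ⊕ Fin c) → ZMod 2,
        (if φ₂ (pad₂ (H₁.mulVec u) (Q.mulVec u)) ≠ u then
          ∏ i, bern α (u i)
        else 0) ≤ ε) :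
    (1 / ((a + b + c : ℕ) : ℝ)) * ∑ x : (Fin a ⊕ Fin b ⊕ Fin c) → ZMod 2,
      ∑ v : (Fin a ⊕ Fin b ⊕ Fin c) → ZMod 2,
      (∏ i, bern θ (x i)) * ((1 : ℝ) / 2 ^ (a + b + c)) *
        (hammingDist x (φ₂ (pad₂ (H₁.mulVec v) (Q.mulVec (φ₁ x v + v)))) : ℝ)
      ≤ D + δ + ε := by

  classical
  have hcard : Fintype.card (Fin a ⊕ Fin b ⊕ Fin c) = a + b + c := by
    simp [add_assoc]
  have hg : ∀ x v : (Fin a ⊕ Fin b ⊕ Fin c) → ZMod 2,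
      φ₂ (pad₂ (H₁.mulVec v) (Q.mulVec (φ₁ x v + v)))
      = φ₂ (pad₂ (H₁.mulVec (φ₁ x v + v)) (Q.mulVec (φ₁ x v + v))) := by
    intro x v
    have : H₁.mulVec v = H₁.mulVec (φ₁ x v + v) := by
      rw [Matrix.mulVec_add, hφ₁C, zero_add]
    rw [this]
  have key := main_aux (a + b + c) hcard (by omega) θ D α δ ε hθ hD hα φ₁
      (fun w => φ₂ (pad₂ (H₁.mulVec w) (Q.mulVec w))) hδ hε
  have e : ∑ x : (Fin a ⊕ Fin b ⊕ Fin c) → ZMod 2,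
      ∑ v : (Fin a ⊕ Fin b ⊕ Fin c) → ZMod 2,
      (∏ i, bern θ (x i)) * ((1 : ℝ) / 2 ^ (a + b + c)) *
        (hammingDist x (φ₂ (pad₂ (H₁.mulVec v) (Q.mulVec (φ₁ x v + v)))) : ℝ)
      = ∑ x : (Fin a ⊕ Fin b ⊕ Fin c) → ZMod 2,
      ∑ v : (Fin a ⊕ Fin b ⊕ Fin c) → ZMod 2,
      (∏ i, bern θ (x i)) * ((1 : ℝ) / 2 ^ (a + b + c)) *
        (hammingDist x (φ₂ (pad₂ (H₁.mulVec (φ₁ x v + v)) (Q.mulVec (φ₁ x v + v)))) : ℝ) :=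
    Finset.sum_congr rfl fun x _ => Finset.sum_congr rfl fun v _ => by rw [hg x v]
  rw [e]
  exact key
end

section
/- Let (Xⁿ,Yⁿ) be i.i.d. with law p(x,y) and Vⁿ i.i.d. uniform on F₂, independent of (Xⁿ,Yⁿ). Define Uⁿ = φ₁(Xⁿ,Vⁿ) ⊕ Vⁿ and X̂ⁿ = ψ₂(pad₂(H₁Vⁿ, QUⁿ), Yⁿ). Then the normalized expected Hamming distortion satisfies (1/n)·E[d_H(Xⁿ, X̂ⁿ)] ≤ D + δ + ε. (Distortion guarantee of the Wyner–Ziv coding scheme built from a point-to-point channel code and a Slepian–Wolf code.) -/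
lemma sum_fun_prod {ι β : Type*} [Fintype ι] [DecidableEq ι] [Fintype β] (g : ι → β → ℝ) :
    ∑ f : ι → β, ∏ i, g i (f i) = ∏ i, ∑ b, g i b := by
  rw [← Fintype.piFinset_univ, Finset.sum_prod_piFinset]

lemma sum_shift {α M : Type*} [Fintype α] [AddGroup α] [AddCommMonoid M] (u : α) (f : α → M) :
    ∑ v, f (u + v) = ∑ v, f v :=
  Fintype.sum_equiv (Equiv.addLeft u) _ _ (fun _ => rfl)

lemma sum_shift' {α M : Type*} [Fintype α] [AddGroup α] [AddCommMonoid M] (u : α) (f : α → M) :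
    ∑ v, f (v + u) = ∑ v, f v :=
  Fintype.sum_equiv (Equiv.addRight u) _ _ (fun _ => rfl)

lemma hd_cast {ι β : Type*} [Fintype ι] [DecidableEq β] (x w : ι → β) :
    (hammingDist x w : ℝ) = ∑ j, if x j ≠ w j then (1:ℝ) else 0 := by
  rw [hammingDist, Finset.card_filter]; push_cast; rfl

lemma mul_le_pos_part (N t g : ℝ) (h0 : 0 ≤ g) (h1 : g ≤ N) :
    t * g ≤ N * ((|t| + t)/2) := by
  rcases le_or_gt 0 t with h | h
  · rw [abs_of_nonneg h]; nlinarith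
  · rw [abs_of_neg h]
    have : t * g ≤ 0 := mul_nonpos_of_nonpos_of_nonneg h.le h0
    nlinarith

theorem core {ι : Type} [Fintype ι] [DecidableEq ι] {𝒴 : Type} [Fintype 𝒴]
    (n : ℕ) (hn : 0 < n) (hcard : Fintype.card ι = n)
    (p : ZMod 2 → 𝒴 → ℝ) (hp0 : ∀ x y, 0 ≤ p x y)
    (hp1 : ∑ x : ZMod 2, ∑ y : 𝒴, p x y = 1)
    (W : ZMod 2 → ZMod 2 → ℝ) (hW0 : ∀ x xh, 0 ≤ W x xh)
    (hW1 : ∀ x, ∑ xh : ZMod 2, W x xh = 1)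
    (D δ ε : ℝ)
    (hdist : ∑ x : ZMod 2, ∑ xh : ZMod 2,
        (if xh ≠ x then (∑ y : 𝒴, p x y) * W x xh else 0) ≤ D)
    (φ₁ : (ι → ZMod 2) → (ι → ZMod 2) → (ι → ZMod 2))
    (Ψ : (ι → ZMod 2) → (ι → 𝒴) → (ι → ZMod 2))
    (hδ : (1 / 2) * ∑ u : ι → ZMod 2, ∑ x : ι → ZMod 2, ∑ v : ι → ZMod 2,
        |(if φ₁ x v = u then (∏ i, ∑ y : 𝒴, p (x i) y) * ((1:ℝ)/2^n) else 0)
          - ∏ i, ((1:ℝ)/2) * (∑ y : 𝒴, p (x i) y) * W (x i) (u i + v i)| ≤ δ)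
    (hε : ∑ xh : ι → ZMod 2, ∑ y : ι → 𝒴,
        (if Ψ xh y ≠ xh then ∏ i, (∑ x : ZMod 2, p x (y i) * W x (xh i)) else 0) ≤ ε) :
    (1/(n:ℝ)) * ∑ x : ι → ZMod 2, ∑ y : ι → 𝒴, ∑ v : ι → ZMod 2,
      (∏ i, p (x i) (y i)) * ((1:ℝ)/2^n) * (hammingDist x (Ψ (φ₁ x v + v) y) : ℝ)
      ≤ D + δ + ε := by
  classical
  have hn' : (0:ℝ) < n := by exact_mod_cast hn
  -- the "success/failure" bounded distortion function
  set Φ : (ι → ZMod 2) → (ι → ZMod 2) → (ι → 𝒴) → ℝ :=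
    fun x w y => if Ψ w y = w then (hammingDist x w : ℝ) else n with hΦ
  have hΦ0 : ∀ x w y, 0 ≤ Φ x w y := by
    intro x w y; simp only [hΦ]; split <;> positivity
  have hdcard : ∀ (x w : ι → ZMod 2), (hammingDist x w : ℝ) ≤ n := by
    intro x w
    calc (hammingDist x w : ℝ) ≤ (Fintype.card ι : ℝ) := by
            exact_mod_cast hammingDist_le_card_fintype
      _ = n := by rw [hcard]
  have hΦn : ∀ x w y, Φ x w y ≤ n := by
    intro x w y; simp only [hΦ]; split
    · exact hdcard x w
    · exact le_refl _
  -- step 1 : bound by Φ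
  have step1 : ∑ x : ι → ZMod 2, ∑ y : ι → 𝒴, ∑ v : ι → ZMod 2,
      (∏ i, p (x i) (y i)) * ((1:ℝ)/2^n) * (hammingDist x (Ψ (φ₁ x v + v) y) : ℝ)
      ≤ ∑ x : ι → ZMod 2, ∑ y : ι → 𝒴, ∑ v : ι → ZMod 2,
      (∏ i, p (x i) (y i)) * ((1:ℝ)/2^n) * Φ x (φ₁ x v + v) y := by
    refine Finset.sum_le_sum fun x _ => Finset.sum_le_sum fun y _ =>
      Finset.sum_le_sum fun v _ => ?_
    have hb : (hammingDist x (Ψ (φ₁ x v + v) y) : ℝ) ≤ Φ x (φ₁ x v + v) y := by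
      simp only [hΦ]; split_ifs with h
      · rw [h]
      · exact hdcard x _
    have hpos : (0:ℝ) ≤ (∏ i, p (x i) (y i)) * ((1:ℝ)/2^n) :=
      mul_nonneg (Finset.prod_nonneg fun i _ => hp0 _ _) (by positivity)
    exact mul_le_mul_of_nonneg_left hb hpos

  -- step 2 : introduce the codeword variable u
  have step2 : ∑ x : ι → ZMod 2, ∑ y : ι → 𝒴, ∑ v : ι → ZMod 2,
      (∏ i, p (x i) (y i)) * ((1:ℝ)/2^n) * Φ x (φ₁ x v + v) y
      = ∑ u : ι → ZMod 2, ∑ x : ι → ZMod 2, ∑ v : ι → ZMod 2, ∑ y : ι → 𝒴,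
        (if φ₁ x v = u then (∏ i, p (x i) (y i)) * ((1:ℝ)/2^n) else 0) * Φ x (u + v) y := by
    conv_rhs => rw [Finset.sum_comm]
    refine Finset.sum_congr rfl fun x _ => ?_
    rw [Finset.sum_comm]
    conv_rhs => rw [Finset.sum_comm]
    refine Finset.sum_congr rfl fun v _ => ?_
    conv_rhs => rw [Finset.sum_comm]
    refine Finset.sum_congr rfl fun y _ => ?_
    simp only [ite_mul, zero_mul]
    rw [Finset.sum_ite_eq]
    simp
  -- total mass of the actual distribution
  have hsumA : ∑ u : ι → ZMod 2, ∑ x : ι → ZMod 2, ∑ v : ι → ZMod 2, ∑ y : ι → 𝒴,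
      (if φ₁ x v = u then (∏ i, p (x i) (y i)) * ((1:ℝ)/2^n) else 0) = 1 := by
    have hcard2 : (Finset.univ : Finset (ι → ZMod 2)).card = 2^n := by
      simp [Finset.card_univ, Fintype.card_fun, ZMod.card, hcard]
    calc ∑ u : ι → ZMod 2, ∑ x : ι → ZMod 2, ∑ v : ι → ZMod 2, ∑ y : ι → 𝒴,
        (if φ₁ x v = u then (∏ i, p (x i) (y i)) * ((1:ℝ)/2^n) else 0)
        = ∑ x : ι → ZMod 2, ∑ v : ι → ZMod 2, ∑ y : ι → 𝒴, ∑ u : ι → ZMod 2,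
          (if φ₁ x v = u then (∏ i, p (x i) (y i)) * ((1:ℝ)/2^n) else 0) := by
          rw [Finset.sum_comm]
          refine Finset.sum_congr rfl fun x _ => ?_
          rw [Finset.sum_comm]
          refine Finset.sum_congr rfl fun v _ => ?_
          rw [Finset.sum_comm]
      _ = ∑ x : ι → ZMod 2, ∑ v : ι → ZMod 2, ∑ y : ι → 𝒴,
          (∏ i, p (x i) (y i)) * ((1:ℝ)/2^n) := by
          refine Finset.sum_congr rfl fun x _ => Finset.sum_congr rfl fun v _ =>
            Finset.sum_congr rfl fun y _ => ?_
          rw [Finset.sum_ite_eq]; simp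
      _ = ∑ x : ι → ZMod 2, ∑ v : ι → ZMod 2,
          (∏ i, ∑ y0 : 𝒴, p (x i) y0) * ((1:ℝ)/2^n) := by
          refine Finset.sum_congr rfl fun x _ => Finset.sum_congr rfl fun v _ => ?_
          rw [← Finset.sum_mul, sum_fun_prod]
      _ = ∑ x : ι → ZMod 2, ((2:ℝ)^n) * ((∏ i, ∑ y0 : 𝒴, p (x i) y0) * ((1:ℝ)/2^n)) := by
          refine Finset.sum_congr rfl fun x _ => ?_
          rw [Finset.sum_const, hcard2, nsmul_eq_mul]; push_cast; ring
      _ = ((2:ℝ)^n) * ((1:ℝ)/2^n) * ∑ x : ι → ZMod 2, ∏ i, ∑ y0 : 𝒴, p (x i) y0 := by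
          rw [← Finset.mul_sum, ← Finset.sum_mul]; ring
      _ = ((2:ℝ)^n) * ((1:ℝ)/2^n) * ∏ _i : ι, ∑ x0 : ZMod 2, ∑ y0 : 𝒴, p x0 y0 := by
          rw [sum_fun_prod (fun _ t => ∑ y0 : 𝒴, p t y0)]
      _ = 1 := by
          rw [hp1]; simp
  -- total mass of the ideal distribution
  have hsumB : ∑ u : ι → ZMod 2, ∑ x : ι → ZMod 2, ∑ v : ι → ZMod 2, ∑ y : ι → 𝒴,
      (∏ i, ((1:ℝ)/2) * p (x i) (y i) * W (x i) (u i + v i)) = 1 := by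
    have hcard2 : (Finset.univ : Finset (ι → ZMod 2)).card = 2^n := by
      simp [Finset.card_univ, Fintype.card_fun, ZMod.card, hcard]
    calc ∑ u : ι → ZMod 2, ∑ x : ι → ZMod 2, ∑ v : ι → ZMod 2, ∑ y : ι → 𝒴,
        (∏ i, ((1:ℝ)/2) * p (x i) (y i) * W (x i) (u i + v i))
        = ∑ u : ι → ZMod 2, ∑ x : ι → ZMod 2, ∑ v : ι → ZMod 2,
          ∏ i, ((1:ℝ)/2) * (∑ y0 : 𝒴, p (x i) y0) * W (x i) (u i + v i) := by
          refine Finset.sum_congr rfl fun u _ => Finset.sum_congr rfl fun x _ =>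
            Finset.sum_congr rfl fun v _ => ?_
          rw [sum_fun_prod (fun i t => ((1:ℝ)/2) * p (x i) t * W (x i) (u i + v i))]
          refine Finset.prod_congr rfl fun i _ => ?_
          rw [← Finset.sum_mul, ← Finset.mul_sum]
      _ = ∑ x : ι → ZMod 2, ∑ v : ι → ZMod 2, ∑ u : ι → ZMod 2,
          ∏ i, ((1:ℝ)/2) * (∑ y0 : 𝒴, p (x i) y0) * W (x i) (u i + v i) := by
          rw [Finset.sum_comm]
          refine Finset.sum_congr rfl fun x _ => ?_
          rw [Finset.sum_comm]
      _ = ∑ x : ι → ZMod 2, ∑ _v : ι → ZMod 2,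
          ∏ i, ((1:ℝ)/2) * (∑ y0 : 𝒴, p (x i) y0) := by
          refine Finset.sum_congr rfl fun x _ => Finset.sum_congr rfl fun v _ => ?_
          rw [sum_fun_prod (fun i t => ((1:ℝ)/2 * ∑ y0 : 𝒴, p (x i) y0) * W (x i) (t + v i))]
          refine Finset.prod_congr rfl fun i _ => ?_
          rw [← Finset.mul_sum]
          rw [sum_shift' (v i) (W (x i)), hW1]
          ring
      _ = ∑ x : ι → ZMod 2, ((2:ℝ)^n) * ∏ i, ((1:ℝ)/2) * (∑ y0 : 𝒴, p (x i) y0) := by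
          refine Finset.sum_congr rfl fun x _ => ?_
          rw [Finset.sum_const, hcard2, nsmul_eq_mul]; push_cast; ring
      _ = ((2:ℝ)^n) * ∏ _i : ι, ∑ x0 : ZMod 2, ((1:ℝ)/2) * (∑ y0 : 𝒴, p x0 y0) := by
          rw [← Finset.mul_sum, sum_fun_prod (fun _ t => ((1:ℝ)/2) * ∑ y0 : 𝒴, p t y0)]
      _ = ((2:ℝ)^n) * ∏ _i : ι, ((1:ℝ)/2) := by
          congr 1
          refine Finset.prod_congr rfl fun i _ => ?_
          rw [← Finset.mul_sum, hp1, mul_one]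
      _ = 1 := by
          rw [Finset.prod_const, Finset.card_univ, hcard]
          rw [← mul_pow]; norm_num
  -- total variation including y
  have hAbs : ∑ u : ι → ZMod 2, ∑ x : ι → ZMod 2, ∑ v : ι → ZMod 2, ∑ y : ι → 𝒴,
      |(if φ₁ x v = u then (∏ i, p (x i) (y i)) * ((1:ℝ)/2^n) else 0)
        - ∏ i, ((1:ℝ)/2) * p (x i) (y i) * W (x i) (u i + v i)| ≤ 2 * δ := by
    have key : ∀ u x v : ι → ZMod 2, ∑ y : ι → 𝒴,
        |(if φ₁ x v = u then (∏ i, p (x i) (y i)) * ((1:ℝ)/2^n) else 0)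
          - ∏ i, ((1:ℝ)/2) * p (x i) (y i) * W (x i) (u i + v i)|
        = |(if φ₁ x v = u then (∏ i, ∑ y : 𝒴, p (x i) y) * ((1:ℝ)/2^n) else 0)
          - ∏ i, ((1:ℝ)/2) * (∑ y : 𝒴, p (x i) y) * W (x i) (u i + v i)| := by
      intro u x v
      have e1 : ∀ y : ι → 𝒴, (if φ₁ x v = u then (∏ i, p (x i) (y i)) * ((1:ℝ)/2^n) else 0)
          - ∏ i, ((1:ℝ)/2) * p (x i) (y i) * W (x i) (u i + v i)
          = (∏ i, p (x i) (y i)) * ((if φ₁ x v = u then ((1:ℝ)/2^n) else 0)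
              - ∏ i, ((1:ℝ)/2) * W (x i) (u i + v i)) := by
        intro y
        rw [mul_sub, mul_ite, mul_zero]
        congr 2
        rw [← Finset.prod_mul_distrib]
        exact Finset.prod_congr rfl fun i _ => by ring
      have e2 : (if φ₁ x v = u then (∏ i, ∑ y : 𝒴, p (x i) y) * ((1:ℝ)/2^n) else 0)
          - ∏ i, ((1:ℝ)/2) * (∑ y : 𝒴, p (x i) y) * W (x i) (u i + v i)
          = (∏ i, ∑ y : 𝒴, p (x i) y) * ((if φ₁ x v = u then ((1:ℝ)/2^n) else 0)
              - ∏ i, ((1:ℝ)/2) * W (x i) (u i + v i)) := by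
        rw [mul_sub, mul_ite, mul_zero]
        congr 2
        rw [← Finset.prod_mul_distrib]
        exact Finset.prod_congr rfl fun i _ => by ring
      calc ∑ y : ι → 𝒴, |(if φ₁ x v = u then (∏ i, p (x i) (y i)) * ((1:ℝ)/2^n) else 0)
            - ∏ i, ((1:ℝ)/2) * p (x i) (y i) * W (x i) (u i + v i)|
          = ∑ y : ι → 𝒴, (∏ i, p (x i) (y i)) * |(if φ₁ x v = u then ((1:ℝ)/2^n) else 0)
              - ∏ i, ((1:ℝ)/2) * W (x i) (u i + v i)| := by
            refine Finset.sum_congr rfl fun y _ => ?_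
            rw [e1 y, abs_mul, abs_of_nonneg (Finset.prod_nonneg fun i _ => hp0 _ _)]
        _ = (∏ i, ∑ y0 : 𝒴, p (x i) y0) * |(if φ₁ x v = u then ((1:ℝ)/2^n) else 0)
              - ∏ i, ((1:ℝ)/2) * W (x i) (u i + v i)| := by
            rw [← Finset.sum_mul, sum_fun_prod (fun i t => p (x i) t)]
        _ = _ := by
            rw [e2, abs_mul,
              abs_of_nonneg (Finset.prod_nonneg fun i _ => Finset.sum_nonneg fun y0 _ => hp0 _ _)]
    calc ∑ u : ι → ZMod 2, ∑ x : ι → ZMod 2, ∑ v : ι → ZMod 2, ∑ y : ι → 𝒴,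
        |(if φ₁ x v = u then (∏ i, p (x i) (y i)) * ((1:ℝ)/2^n) else 0)
          - ∏ i, ((1:ℝ)/2) * p (x i) (y i) * W (x i) (u i + v i)|
        = ∑ u : ι → ZMod 2, ∑ x : ι → ZMod 2, ∑ v : ι → ZMod 2,
          |(if φ₁ x v = u then (∏ i, ∑ y : 𝒴, p (x i) y) * ((1:ℝ)/2^n) else 0)
            - ∏ i, ((1:ℝ)/2) * (∑ y : 𝒴, p (x i) y) * W (x i) (u i + v i)| := by
          exact Finset.sum_congr rfl fun u _ => Finset.sum_congr rfl fun x _ =>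
            Finset.sum_congr rfl fun v _ => key u x v
      _ ≤ 2 * δ := by linarith [hδ]
  -- step 3 : change measure
  have step3 : ∑ u : ι → ZMod 2, ∑ x : ι → ZMod 2, ∑ v : ι → ZMod 2, ∑ y : ι → 𝒴,
      (if φ₁ x v = u then (∏ i, p (x i) (y i)) * ((1:ℝ)/2^n) else 0) * Φ x (u + v) y
      ≤ (∑ u : ι → ZMod 2, ∑ x : ι → ZMod 2, ∑ v : ι → ZMod 2, ∑ y : ι → 𝒴,
        (∏ i, ((1:ℝ)/2) * p (x i) (y i) * W (x i) (u i + v i)) * Φ x (u + v) y) + n * δ := by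
    have hzero : ∑ u : ι → ZMod 2, ∑ x : ι → ZMod 2, ∑ v : ι → ZMod 2, ∑ y : ι → 𝒴,
        ((if φ₁ x v = u then (∏ i, p (x i) (y i)) * ((1:ℝ)/2^n) else 0) - (∏ i, ((1:ℝ)/2) * p (x i) (y i) * W (x i) (u i + v i))) = 0 := by
      simp only [Finset.sum_sub_distrib]
      rw [hsumA, hsumB, sub_self]
    have hpt : ∑ u : ι → ZMod 2, ∑ x : ι → ZMod 2, ∑ v : ι → ZMod 2, ∑ y : ι → 𝒴,
        (((if φ₁ x v = u then (∏ i, p (x i) (y i)) * ((1:ℝ)/2^n) else 0) - (∏ i, ((1:ℝ)/2) * p (x i) (y i) * W (x i) (u i + v i))) * Φ x (u + v) y) ≤ (n:ℝ) * δ := by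
      have e : ∀ t : ℝ, (n:ℝ) * ((|t| + t)/2) = (n:ℝ)/2 * |t| + (n:ℝ)/2 * t := fun t => by ring
      calc ∑ u : ι → ZMod 2, ∑ x : ι → ZMod 2, ∑ v : ι → ZMod 2, ∑ y : ι → 𝒴,
        (((if φ₁ x v = u then (∏ i, p (x i) (y i)) * ((1:ℝ)/2^n) else 0) - (∏ i, ((1:ℝ)/2) * p (x i) (y i) * W (x i) (u i + v i))) * Φ x (u + v) y)
          ≤ ∑ u : ι → ZMod 2, ∑ x : ι → ZMod 2, ∑ v : ι → ZMod 2, ∑ y : ι → 𝒴,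
        ((n:ℝ) * ((|(if φ₁ x v = u then (∏ i, p (x i) (y i)) * ((1:ℝ)/2^n) else 0) - (∏ i, ((1:ℝ)/2) * p (x i) (y i) * W (x i) (u i + v i))| + ((if φ₁ x v = u then (∏ i, p (x i) (y i)) * ((1:ℝ)/2^n) else 0) - (∏ i, ((1:ℝ)/2) * p (x i) (y i) * W (x i) (u i + v i))))/2)) := by
            refine Finset.sum_le_sum fun u _ => Finset.sum_le_sum fun x _ =>
              Finset.sum_le_sum fun v _ => Finset.sum_le_sum fun y _ => ?_
            exact mul_le_pos_part _ _ _ (hΦ0 _ _ _) (hΦn _ _ _)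
        _ = (n:ℝ)/2 * (∑ u : ι → ZMod 2, ∑ x : ι → ZMod 2, ∑ v : ι → ZMod 2, ∑ y : ι → 𝒴,
        |(if φ₁ x v = u then (∏ i, p (x i) (y i)) * ((1:ℝ)/2^n) else 0) - (∏ i, ((1:ℝ)/2) * p (x i) (y i) * W (x i) (u i + v i))|) + (n:ℝ)/2 * (∑ u : ι → ZMod 2, ∑ x : ι → ZMod 2, ∑ v : ι → ZMod 2, ∑ y : ι → 𝒴,
        ((if φ₁ x v = u then (∏ i, p (x i) (y i)) * ((1:ℝ)/2^n) else 0) - (∏ i, ((1:ℝ)/2) * p (x i) (y i) * W (x i) (u i + v i)))) := by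
            simp only [e, Finset.sum_add_distrib, ← Finset.mul_sum]
        _ ≤ (n:ℝ)/2 * (2 * δ) + (n:ℝ)/2 * 0 := by
            rw [hzero]
            have h2 := mul_le_mul_of_nonneg_left hAbs (by positivity : (0:ℝ) ≤ (n:ℝ)/2)
            linarith
        _ = (n:ℝ) * δ := by ring
    have expand : (∑ u : ι → ZMod 2, ∑ x : ι → ZMod 2, ∑ v : ι → ZMod 2, ∑ y : ι → 𝒴,
        ((if φ₁ x v = u then (∏ i, p (x i) (y i)) * ((1:ℝ)/2^n) else 0) * Φ x (u + v) y)) - (∑ u : ι → ZMod 2, ∑ x : ι → ZMod 2, ∑ v : ι → ZMod 2, ∑ y : ι → 𝒴,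
        ((∏ i, ((1:ℝ)/2) * p (x i) (y i) * W (x i) (u i + v i)) * Φ x (u + v) y))
        = ∑ u : ι → ZMod 2, ∑ x : ι → ZMod 2, ∑ v : ι → ZMod 2, ∑ y : ι → 𝒴,
        (((if φ₁ x v = u then (∏ i, p (x i) (y i)) * ((1:ℝ)/2^n) else 0) - (∏ i, ((1:ℝ)/2) * p (x i) (y i) * W (x i) (u i + v i))) * Φ x (u + v) y) := by
      simp only [← Finset.sum_sub_distrib, ← sub_mul]
    linarith [hpt, expand.ge]

  -- step 4 : bound under the ideal distribution
  have step4 : ∑ u : ι → ZMod 2, ∑ x : ι → ZMod 2, ∑ v : ι → ZMod 2, ∑ y : ι → 𝒴,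
      (∏ i, ((1:ℝ)/2) * p (x i) (y i) * W (x i) (u i + v i)) * Φ x (u + v) y
      ≤ n * D + n * ε := by
    have hcard2 : (Finset.univ : Finset (ι → ZMod 2)).card = 2^n := by
      simp [Finset.card_univ, Fintype.card_fun, ZMod.card, hcard]
    have h21 : (2:ℝ)^n * ((1:ℝ)/2)^n = 1 := by rw [← mul_pow]; norm_num
    have ha : ∑ u : ι → ZMod 2, ∑ x : ι → ZMod 2, ∑ v : ι → ZMod 2, ∑ y : ι → 𝒴, (∏ i, ((1:ℝ)/2) * p (x i) (y i) * W (x i) (u i + v i)) * Φ x (u + v) y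
        = ∑ x : ι → ZMod 2, ∑ y : ι → 𝒴, ∑ w : ι → ZMod 2, (∏ i, p (x i) (y i) * W (x i) (w i)) * Φ x w y := by
      calc ∑ u : ι → ZMod 2, ∑ x : ι → ZMod 2, ∑ v : ι → ZMod 2, ∑ y : ι → 𝒴, (∏ i, ((1:ℝ)/2) * p (x i) (y i) * W (x i) (u i + v i)) * Φ x (u + v) y
          = ∑ x : ι → ZMod 2, ∑ u : ι → ZMod 2, ∑ v : ι → ZMod 2, ∑ y : ι → 𝒴, (∏ i, ((1:ℝ)/2) * p (x i) (y i) * W (x i) (u i + v i)) * Φ x (u + v) y := Finset.sum_comm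
        _ = ∑ x : ι → ZMod 2, ∑ u : ι → ZMod 2, ∑ y : ι → 𝒴, ∑ v : ι → ZMod 2, (∏ i, ((1:ℝ)/2) * p (x i) (y i) * W (x i) (u i + v i)) * Φ x (u + v) y := by
            exact Finset.sum_congr rfl fun x _ => Finset.sum_congr rfl fun u _ =>
              Finset.sum_comm
        _ = ∑ x : ι → ZMod 2, ∑ u : ι → ZMod 2, ∑ y : ι → 𝒴, ∑ w : ι → ZMod 2,
            (∏ i, ((1:ℝ)/2) * p (x i) (y i) * W (x i) (w i)) * Φ x w y := by
            refine Finset.sum_congr rfl fun x _ => Finset.sum_congr rfl fun u _ =>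
              Finset.sum_congr rfl fun y _ => ?_
            exact sum_shift u
              (fun w => (∏ i, ((1:ℝ)/2) * p (x i) (y i) * W (x i) (w i)) * Φ x w y)
        _ = ∑ x : ι → ZMod 2, ((2:ℝ)^n) * (∑ y : ι → 𝒴, ∑ w : ι → ZMod 2,
            (∏ i, ((1:ℝ)/2) * p (x i) (y i) * W (x i) (w i)) * Φ x w y) := by
            refine Finset.sum_congr rfl fun x _ => ?_
            rw [Finset.sum_const, hcard2, nsmul_eq_mul]; push_cast; ring
        _ = ∑ x : ι → ZMod 2, ∑ y : ι → 𝒴, ∑ w : ι → ZMod 2, (∏ i, p (x i) (y i) * W (x i) (w i)) * Φ x w y := by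
            refine Finset.sum_congr rfl fun x _ => ?_
            rw [Finset.mul_sum]
            refine Finset.sum_congr rfl fun y _ => ?_
            rw [Finset.mul_sum]
            refine Finset.sum_congr rfl fun w _ => ?_
            have hp2 : (∏ i, ((1:ℝ)/2) * p (x i) (y i) * W (x i) (w i))
                = ((1:ℝ)/2)^n * ∏ i, p (x i) (y i) * W (x i) (w i) := by
              calc ∏ i, ((1:ℝ)/2) * p (x i) (y i) * W (x i) (w i)
                  = ∏ i, ((1:ℝ)/2) * (p (x i) (y i) * W (x i) (w i)) :=
                    Finset.prod_congr rfl fun i _ => by ring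
                _ = (∏ _i : ι, ((1:ℝ)/2)) * ∏ i, p (x i) (y i) * W (x i) (w i) :=
                    Finset.prod_mul_distrib
                _ = ((1:ℝ)/2)^n * ∏ i, p (x i) (y i) * W (x i) (w i) := by
                    rw [Finset.prod_const, Finset.card_univ, hcard]
            rw [hp2]
            linear_combination (∏ i, p (x i) (y i) * W (x i) (w i)) * Φ x w y * h21
    have hsplit : ∑ x : ι → ZMod 2, ∑ y : ι → 𝒴, ∑ w : ι → ZMod 2, (∏ i, p (x i) (y i) * W (x i) (w i)) * Φ x w y = (∑ x : ι → ZMod 2, ∑ y : ι → 𝒴, ∑ w : ι → ZMod 2, (if Ψ w y = w then (∏ i, p (x i) (y i) * W (x i) (w i)) * (hammingDist x w : ℝ) else 0)) + (∑ x : ι → ZMod 2, ∑ y : ι → 𝒴, ∑ w : ι → ZMod 2, (if Ψ w y ≠ w then (∏ i, p (x i) (y i) * W (x i) (w i)) * (n:ℝ) else 0)) := by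
      have pt : ∀ (x w : ι → ZMod 2) (y : ι → 𝒴), (∏ i, p (x i) (y i) * W (x i) (w i)) * Φ x w y
          = (if Ψ w y = w then (∏ i, p (x i) (y i) * W (x i) (w i)) * (hammingDist x w : ℝ) else 0)
            + (if Ψ w y ≠ w then (∏ i, p (x i) (y i) * W (x i) (w i)) * (n:ℝ) else 0) := by
        intro x w y
        by_cases h : Ψ w y = w <;> simp [hΦ, h]
      calc ∑ x : ι → ZMod 2, ∑ y : ι → 𝒴, ∑ w : ι → ZMod 2, (∏ i, p (x i) (y i) * W (x i) (w i)) * Φ x w y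
          = ∑ x : ι → ZMod 2, ∑ y : ι → 𝒴, ∑ w : ι → ZMod 2,
            ((if Ψ w y = w then (∏ i, p (x i) (y i) * W (x i) (w i)) * (hammingDist x w : ℝ) else 0)
              + (if Ψ w y ≠ w then (∏ i, p (x i) (y i) * W (x i) (w i)) * (n:ℝ) else 0)) := by
            exact Finset.sum_congr rfl fun x _ => Finset.sum_congr rfl fun y _ =>
              Finset.sum_congr rfl fun w _ => pt x w y
        _ = (∑ x : ι → ZMod 2, ∑ y : ι → 𝒴, ∑ w : ι → ZMod 2, (if Ψ w y = w then (∏ i, p (x i) (y i) * W (x i) (w i)) * (hammingDist x w : ℝ) else 0)) + (∑ x : ι → ZMod 2, ∑ y : ι → 𝒴, ∑ w : ι → ZMod 2, (if Ψ w y ≠ w then (∏ i, p (x i) (y i) * W (x i) (w i)) * (n:ℝ) else 0)) := by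
            simp only [Finset.sum_add_distrib]
    have hbad : (∑ x : ι → ZMod 2, ∑ y : ι → 𝒴, ∑ w : ι → ZMod 2, (if Ψ w y ≠ w then (∏ i, p (x i) (y i) * W (x i) (w i)) * (n:ℝ) else 0)) ≤ n * ε := by
      calc ∑ x : ι → ZMod 2, ∑ y : ι → 𝒴, ∑ w : ι → ZMod 2, (if Ψ w y ≠ w then (∏ i, p (x i) (y i) * W (x i) (w i)) * (n:ℝ) else 0)
          = ∑ x : ι → ZMod 2, ∑ w : ι → ZMod 2, ∑ y : ι → 𝒴, (if Ψ w y ≠ w then (∏ i, p (x i) (y i) * W (x i) (w i)) * (n:ℝ) else 0) :=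
            Finset.sum_congr rfl fun x _ => Finset.sum_comm
        _ = ∑ w : ι → ZMod 2, ∑ x : ι → ZMod 2, ∑ y : ι → 𝒴, (if Ψ w y ≠ w then (∏ i, p (x i) (y i) * W (x i) (w i)) * (n:ℝ) else 0) :=
            Finset.sum_comm
        _ = ∑ w : ι → ZMod 2, ∑ y : ι → 𝒴, ∑ x : ι → ZMod 2, (if Ψ w y ≠ w then (∏ i, p (x i) (y i) * W (x i) (w i)) * (n:ℝ) else 0) :=
            Finset.sum_congr rfl fun w _ => Finset.sum_comm
        _ = ∑ w : ι → ZMod 2, ∑ y : ι → 𝒴, (if Ψ w y ≠ w then (n:ℝ) else 0)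
              * (∏ i, ∑ x0 : ZMod 2, p x0 (y i) * W x0 (w i)) := by
            refine Finset.sum_congr rfl fun w _ => Finset.sum_congr rfl fun y _ => ?_
            have e : ∀ x : ι → ZMod 2, (if Ψ w y ≠ w then (∏ i, p (x i) (y i) * W (x i) (w i)) * (n:ℝ) else 0)
                = (if Ψ w y ≠ w then (n:ℝ) else 0) * (∏ i, p (x i) (y i) * W (x i) (w i)) := by
              intro x; split_ifs <;> ring
            rw [Finset.sum_congr rfl fun x _ => e x, ← Finset.mul_sum,
              sum_fun_prod (fun i t => p t (y i) * W t (w i))]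
        _ = n * ∑ w : ι → ZMod 2, ∑ y : ι → 𝒴, (if Ψ w y ≠ w then
              (∏ i, ∑ x0 : ZMod 2, p x0 (y i) * W x0 (w i)) else 0) := by
            rw [Finset.mul_sum]
            refine Finset.sum_congr rfl fun w _ => ?_
            rw [Finset.mul_sum]
            refine Finset.sum_congr rfl fun y _ => ?_
            split_ifs <;> ring
        _ ≤ n * ε := by
            have := mul_le_mul_of_nonneg_left hε (le_of_lt hn')
            linarith
    have hgood : (∑ x : ι → ZMod 2, ∑ y : ι → 𝒴, ∑ w : ι → ZMod 2, (if Ψ w y = w then (∏ i, p (x i) (y i) * W (x i) (w i)) * (hammingDist x w : ℝ) else 0)) ≤ n * D := by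
      have hDj : ∀ _j : ι, (∑ x0 : ZMod 2, ∑ w0 : ZMod 2,
          ((∑ y0 : 𝒴, p x0 y0) * W x0 w0 * (if x0 ≠ w0 then (1:ℝ) else 0))) ≤ D := by
        intro j
        refine le_trans (le_of_eq ?_) hdist
        refine Finset.sum_congr rfl fun x0 _ => Finset.sum_congr rfl fun w0 _ => ?_
        by_cases h : x0 = w0
        · simp [h]
        · simp [h, Ne.symm h]
      calc ∑ x : ι → ZMod 2, ∑ y : ι → 𝒴, ∑ w : ι → ZMod 2, (if Ψ w y = w then (∏ i, p (x i) (y i) * W (x i) (w i)) * (hammingDist x w : ℝ) else 0)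
          ≤ ∑ x : ι → ZMod 2, ∑ y : ι → 𝒴, ∑ w : ι → ZMod 2, (∏ i, p (x i) (y i) * W (x i) (w i)) * (hammingDist x w : ℝ) := by
            refine Finset.sum_le_sum fun x _ => Finset.sum_le_sum fun y _ =>
              Finset.sum_le_sum fun w _ => ?_
            split_ifs
            · exact le_refl _
            · exact mul_nonneg (Finset.prod_nonneg fun i _ =>
                mul_nonneg (hp0 _ _) (hW0 _ _)) (Nat.cast_nonneg _)
        _ = ∑ x : ι → ZMod 2, ∑ w : ι → ZMod 2, ∑ y : ι → 𝒴, (∏ i, p (x i) (y i) * W (x i) (w i)) * (hammingDist x w : ℝ) :=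
            Finset.sum_congr rfl fun x _ => Finset.sum_comm
        _ = ∑ x : ι → ZMod 2, ∑ w : ι → ZMod 2, (∏ i, (∑ y0 : 𝒴, p (x i) y0) * W (x i) (w i)) * (hammingDist x w : ℝ) := by
            refine Finset.sum_congr rfl fun x _ => Finset.sum_congr rfl fun w _ => ?_
            rw [← Finset.sum_mul, sum_fun_prod (fun i t => p (x i) t * W (x i) (w i))]
            congr 1
            refine Finset.prod_congr rfl fun i _ => ?_
            rw [← Finset.sum_mul]
        _ = ∑ x : ι → ZMod 2, ∑ w : ι → ZMod 2, ∑ j : ι, (∏ i, (∑ y0 : 𝒴, p (x i) y0) * W (x i) (w i)) * (if x j ≠ w j then (1:ℝ) else 0) := by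
            refine Finset.sum_congr rfl fun x _ => Finset.sum_congr rfl fun w _ => ?_
            rw [hd_cast, Finset.mul_sum]
        _ = ∑ j : ι, ∑ x : ι → ZMod 2, ∑ w : ι → ZMod 2, (∏ i, (∑ y0 : 𝒴, p (x i) y0) * W (x i) (w i)) * (if x j ≠ w j then (1:ℝ) else 0) := by
            exact (Finset.sum_congr rfl fun x _ => Finset.sum_comm).trans Finset.sum_comm
        _ ≤ ∑ _j : ι, D := by
            refine Finset.sum_le_sum fun j _ => ?_
            calc ∑ x : ι → ZMod 2, ∑ w : ι → ZMod 2, (∏ i, (∑ y0 : 𝒴, p (x i) y0) * W (x i) (w i)) * (if x j ≠ w j then (1:ℝ) else 0)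
                = ∑ x : ι → ZMod 2, ∑ w : ι → ZMod 2, ∏ i, ((∑ y0 : 𝒴, p (x i) y0) * W (x i) (w i)
                    * (if i = j then (if x i ≠ w i then (1:ℝ) else 0) else 1)) := by
                  refine Finset.sum_congr rfl fun x _ => Finset.sum_congr rfl fun w _ => ?_
                  symm
                  rw [Finset.prod_mul_distrib]
                  congr 1
                  rw [Finset.prod_ite_eq' Finset.univ j
                    (fun i => if x i ≠ w i then (1:ℝ) else 0)]
                  simp
              _ = ∑ x : ι → ZMod 2, ∏ i, ∑ w0 : ZMod 2, ((∑ y0 : 𝒴, p (x i) y0) * W (x i) w0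
                    * (if i = j then (if x i ≠ w0 then (1:ℝ) else 0) else 1)) := by
                  refine Finset.sum_congr rfl fun x _ => ?_
                  rw [sum_fun_prod (fun i t => (∑ y0 : 𝒴, p (x i) y0) * W (x i) t
                    * (if i = j then (if x i ≠ t then (1:ℝ) else 0) else 1))]
              _ = ∏ i : ι, ∑ x0 : ZMod 2, ∑ w0 : ZMod 2, ((∑ y0 : 𝒴, p x0 y0) * W x0 w0
                    * (if i = j then (if x0 ≠ w0 then (1:ℝ) else 0) else 1)) := by
                  rw [sum_fun_prod (fun i t => ∑ w0 : ZMod 2, ((∑ y0 : 𝒴, p t y0) * W t w0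
                    * (if i = j then (if t ≠ w0 then (1:ℝ) else 0) else 1)))]
              _ = ∑ x0 : ZMod 2, ∑ w0 : ZMod 2, ((∑ y0 : 𝒴, p x0 y0) * W x0 w0
                    * (if x0 ≠ w0 then (1:ℝ) else 0)) := by
                  rw [Finset.prod_eq_single j]
                  · simp
                  · intro i _ hij
                    simp only [if_neg hij, mul_one]
                    have e1 : ∀ x0 : ZMod 2, ∑ w0 : ZMod 2,
                        (∑ y0 : 𝒴, p x0 y0) * W x0 w0 = ∑ y0 : 𝒴, p x0 y0 := fun x0 => by
                      rw [← Finset.mul_sum, hW1, mul_one]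
                    rw [Finset.sum_congr rfl fun x0 _ => e1 x0]
                    exact hp1
                  · intro h; exact absurd (Finset.mem_univ j) h
              _ ≤ D := hDj j
        _ = n * D := by
            rw [Finset.sum_const, Finset.card_univ, hcard, nsmul_eq_mul]
    calc ∑ u : ι → ZMod 2, ∑ x : ι → ZMod 2, ∑ v : ι → ZMod 2, ∑ y : ι → 𝒴, (∏ i, ((1:ℝ)/2) * p (x i) (y i) * W (x i) (u i + v i)) * Φ x (u + v) y
        = ∑ x : ι → ZMod 2, ∑ y : ι → 𝒴, ∑ w : ι → ZMod 2, (∏ i, p (x i) (y i) * W (x i) (w i)) * Φ x w y := ha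
      _ = (∑ x : ι → ZMod 2, ∑ y : ι → 𝒴, ∑ w : ι → ZMod 2, (if Ψ w y = w then (∏ i, p (x i) (y i) * W (x i) (w i)) * (hammingDist x w : ℝ) else 0)) + (∑ x : ι → ZMod 2, ∑ y : ι → 𝒴, ∑ w : ι → ZMod 2, (if Ψ w y ≠ w then (∏ i, p (x i) (y i) * W (x i) (w i)) * (n:ℝ) else 0)) := hsplit
      _ ≤ n * D + n * ε := add_le_add hgood hbad

  have final : ∑ x : ι → ZMod 2, ∑ y : ι → 𝒴, ∑ v : ι → ZMod 2,
      (∏ i, p (x i) (y i)) * ((1:ℝ)/2^n) * (hammingDist x (Ψ (φ₁ x v + v) y) : ℝ)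
      ≤ n * (D + δ + ε) := by
    calc _ ≤ _ := step1
      _ = _ := step2
      _ ≤ _ := step3
      _ ≤ n * D + n * ε + n * δ := by linarith
      _ = n * (D + δ + ε) := by ring
  calc (1/(n:ℝ)) * ∑ x : ι → ZMod 2, ∑ y : ι → 𝒴, ∑ v : ι → ZMod 2,
      (∏ i, p (x i) (y i)) * ((1:ℝ)/2^n) * (hammingDist x (Ψ (φ₁ x v + v) y) : ℝ)
      ≤ (1/(n:ℝ)) * (n * (D + δ + ε)) := by
        apply mul_le_mul_of_nonneg_left final (by positivity)
    _ = D + δ + ε := by field_simp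

/-- **Wyner–Ziv coding scheme.** -/
theorem stmt11 (a b c : ℕ) (hb : 0 < b) (hc : 0 < c)
    (𝒴 : Type) [Fintype 𝒴]
    (p : ZMod 2 → 𝒴 → ℝ) (hp0 : ∀ x y, 0 ≤ p x y)
    (hp1 : ∑ x : ZMod 2, ∑ y : 𝒴, p x y = 1)
    (W : ZMod 2 → ZMod 2 → ℝ) (hW0 : ∀ x xh, 0 ≤ W x xh)
    (hW1 : ∀ x, ∑ xh : ZMod 2, W x xh = 1)
    (D δ ε : ℝ)
    (hdist : ∑ x : ZMod 2, ∑ xh : ZMod 2,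
        (if xh ≠ x then (∑ y : 𝒴, p x y) * W x xh else 0) ≤ D)
    (H₁ : Matrix (Fin b) (Fin a ⊕ Fin b ⊕ Fin c) (ZMod 2))
    (Q : Matrix (Fin c) (Fin a ⊕ Fin b ⊕ Fin c) (ZMod 2))
    (φ₁ : ((Fin a ⊕ Fin b ⊕ Fin c) → ZMod 2) →
          ((Fin a ⊕ Fin b ⊕ Fin c) → ZMod 2) →
          ((Fin a ⊕ Fin b ⊕ Fin c) → ZMod 2))
    (hφ₁C : ∀ x v, H₁.mulVec (φ₁ x v) = 0)
    (hδ : (1 / 2) * ∑ u : (Fin a ⊕ Fin b ⊕ Fin c) → ZMod 2,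
        ∑ x : (Fin a ⊕ Fin b ⊕ Fin c) → ZMod 2,
        ∑ v : (Fin a ⊕ Fin b ⊕ Fin c) → ZMod 2,
        |(if φ₁ x v = u then
            (∏ i, ∑ y : 𝒴, p (x i) y) * ((1 : ℝ) / 2 ^ (a + b + c))
          else 0)
          - ∏ i, ((1 : ℝ) / 2) * (∑ y : 𝒴, p (x i) y) * W (x i) (u i + v i)| ≤ δ)
    (ψ₂ : ((Fin a ⊕ Fin b ⊕ Fin c) → ZMod 2) →
          ((Fin a ⊕ Fin b ⊕ Fin c) → 𝒴) →
          ((Fin a ⊕ Fin b ⊕ Fin c) → ZMod 2))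
    (hε : ∑ xh : (Fin a ⊕ Fin b ⊕ Fin c) → ZMod 2,
        ∑ y : (Fin a ⊕ Fin b ⊕ Fin c) → 𝒴,
        (if ψ₂ (pad₂ (H₁.mulVec xh) (Q.mulVec xh)) y ≠ xh then
          ∏ i, (∑ x : ZMod 2, p x (y i) * W x (xh i))
        else 0) ≤ ε) :
    (1 / ((a + b + c : ℕ) : ℝ)) * ∑ x : (Fin a ⊕ Fin b ⊕ Fin c) → ZMod 2,
      ∑ y : (Fin a ⊕ Fin b ⊕ Fin c) → 𝒴,
      ∑ v : (Fin a ⊕ Fin b ⊕ Fin c) → ZMod 2,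
      (∏ i, p (x i) (y i)) * ((1 : ℝ) / 2 ^ (a + b + c)) *
        (hammingDist x (ψ₂ (pad₂ (H₁.mulVec v) (Q.mulVec (φ₁ x v + v))) y) : ℝ)
      ≤ D + δ + ε := by
  have hrw : ∀ (x v : (Fin a ⊕ Fin b ⊕ Fin c) → ZMod 2),
      pad₂ (a := a) (H₁.mulVec v) (Q.mulVec (φ₁ x v + v))
        = pad₂ (H₁.mulVec (φ₁ x v + v)) (Q.mulVec (φ₁ x v + v)) := by
    intro x v
    have h : H₁.mulVec (φ₁ x v + v) = H₁.mulVec v := by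
      rw [Matrix.mulVec_add, hφ₁C, zero_add]
    rw [h]
  simp only [hrw]
  exact core (a + b + c) (by omega)
    (by simp only [Fintype.card_sum, Fintype.card_fin]; omega)
    p hp0 hp1 W hW0 hW1 D δ ε hdist φ₁
    (fun w y => ψ₂ (pad₂ (H₁.mulVec w) (Q.mulVec w)) y) hδ hε
end
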